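/- arXiv:2009.04405 — 8 statements merged into one kernel-verified Lean document; each statement's English description precedes it below -/
import Mathlib

section
/- A matrix A ∈ ℝ^{n×n} is a P-matrix (all principal minors positive) if and only if for every x ∈ ℝ^n, the condition x_i (Ax)_i ≤ 0 for all i implies x = 0. -/
open Matrix Finset

def IsPMatrix {n : ℕ} (A : Matrix (Fin n) (Fin n) ℝ) : Prop :=
  ∀ s : Finset (Fin n),
    0 < (A.submatrix (fun i : s => (i : Fin n)) (fun j : s => (j : Fin n))).det

def IsNMatrix {n : ℕ} (A : Matrix (Fin n) (Fin n) ℝ) : Prop :=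
  ∀ s : Finset (Fin n), s.Nonempty →
    (A.submatrix (fun i : s => (i : Fin n)) (fun j : s => (j : Fin n))).det < 0

def IsAlmostPMatrix {n : ℕ} (A : Matrix (Fin n) (Fin n) ℝ) : Prop :=
  (∀ s : Finset (Fin n), s.Nonempty → s ≠ Finset.univ →
    0 < (A.submatrix (fun i : s => (i : Fin n)) (fun j : s => (j : Fin n))).det) ∧
  A.det < 0

def IntervalHull {m n : ℕ} (A B : Matrix (Fin m) (Fin n) ℝ) :
    Set (Matrix (Fin m) (Fin n) ℝ) :=
  {C | ∀ i j, ∃ t : ℝ, t ∈ Set.Icc (0:ℝ) 1 ∧ C i j = t * A i j + (1 - t) * B i j}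

noncomputable def Iu {m n : ℕ} (A B : Matrix (Fin m) (Fin n) ℝ) : Matrix (Fin m) (Fin n) ℝ :=
  fun i j => max (A i j) (B i j)

noncomputable def Il {m n : ℕ} (A B : Matrix (Fin m) (Fin n) ℝ) : Matrix (Fin m) (Fin n) ℝ :=
  fun i j => min (A i j) (B i j)

noncomputable def Ic {m n : ℕ} (A B : Matrix (Fin m) (Fin n) ℝ) : Matrix (Fin m) (Fin n) ℝ :=
  fun i j => (A i j + B i j) / 2

noncomputable def Dlt {m n : ℕ} (A B : Matrix (Fin m) (Fin n) ℝ) : Matrix (Fin m) (Fin n) ℝ :=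
  fun i j => (Iu A B i j - Il A B i j) / 2

noncomputable def Iz {n : ℕ} (A B : Matrix (Fin n) (Fin n) ℝ) (z : Fin n → ℝ) :
    Matrix (Fin n) (Fin n) ℝ :=
  Ic A B - Matrix.diagonal z * Dlt A B * Matrix.diagonal z

def SignVec {n : ℕ} (z : Fin n → ℝ) : Prop := ∀ i, z i = 1 ∨ z i = -1

def BlockPattern {n : ℕ} (A : Matrix (Fin n) (Fin n) ℝ) (J : Finset (Fin n)) : Prop :=
  (∀ i ∈ J, ∀ j ∈ J, A i j < 0) ∧ (∀ i ∉ J, ∀ j ∉ J, A i j < 0) ∧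
  (∀ i ∈ J, ∀ j ∉ J, 0 < A i j) ∧ (∀ i ∉ J, ∀ j ∈ J, 0 < A i j)

def IsNMatrixSecond {n : ℕ} (A : Matrix (Fin n) (Fin n) ℝ) : Prop :=
  IsNMatrix A ∧ ∀ i j, A i j ≤ 0

def IsNMatrixFirst {n : ℕ} (A : Matrix (Fin n) (Fin n) ℝ) (J : Finset (Fin n)) : Prop :=
  IsNMatrix A ∧ BlockPattern A J

def IsAlmostPSecond {n : ℕ} (A : Matrix (Fin n) (Fin n) ℝ) : Prop :=
  IsUnit A.det ∧ IsNMatrix A⁻¹ ∧ ∀ i j, A⁻¹ i j < 0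

def IsAlmostPFirst {n : ℕ} (A : Matrix (Fin n) (Fin n) ℝ) (J : Finset (Fin n)) : Prop :=
  IsUnit A.det ∧ IsNMatrixFirst A⁻¹ J

def InJ {n : ℕ} (J : Finset (Fin n)) (x : Fin n → ℝ) : Prop :=
  (∀ j ∈ J, 0 < x j) ∧ (∀ j ∉ J, x j < 0)

def Semipos {p q : Type*} [Fintype q] (M : Matrix p q ℝ) : Prop :=
  ∃ x : q → ℝ, (∀ j, 0 ≤ x j) ∧ ∀ i, 0 < M.mulVec x i

def MinSemipos {m n : ℕ} (M : Matrix (Fin m) (Fin n) ℝ) : Prop :=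
  Semipos M ∧
  ∀ j₀ : Fin n, ¬ Semipos (M.submatrix id (fun j : {j : Fin n // j ≠ j₀} => (j : Fin n)))

section PMatrixAux

universe u


/-- piecewise matrix: rows in `s` are the rows of `diagonal d`, other rows from `A`. -/
def pwMat {ι : Type u} [DecidableEq ι] (A : Matrix ι ι ℝ) (d : ι → ℝ) (s : Finset ι) :
    Matrix ι ι ℝ :=
  fun i j => if i ∈ s then (if i = j then d i else 0) else A i j

lemma det_submatrix_comp_equiv {ι κ κ' : Type u} [Fintype ι] [DecidableEq ι]
    [Fintype κ] [Fintype κ'] [DecidableEq κ] [DecidableEq κ']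
    (A : Matrix ι ι ℝ) (e : κ ≃ κ') (f : κ' → ι) :
    (A.submatrix (f ∘ e) (f ∘ e)).det = (A.submatrix f f).det := by
  rw [← Matrix.submatrix_submatrix, Matrix.det_submatrix_equiv_self]

lemma pwMat_det_aux : ∀ (k : ℕ) {ι : Type u} [Fintype ι] [DecidableEq ι]
    (A : Matrix ι ι ℝ) (d : ι → ℝ) (s : Finset ι), s.card = k →
    (pwMat A d s).det =
      (∏ i ∈ s, d i) * (A.submatrix (Subtype.val : {a // a ∉ s} → ι) Subtype.val).det := by
  intro k
  induction k with
  | zero =>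
    intro ι _ _ A d s hs
    rw [Finset.card_eq_zero] at hs
    subst hs
    have h1 : pwMat A d (∅ : Finset ι) = A := by
      funext i j
      simp [pwMat]
    rw [h1]
    simp only [Finset.prod_empty, one_mul]
    rw [← Matrix.det_submatrix_equiv_self
      (⟨Subtype.val, fun a => ⟨a, Finset.notMem_empty a⟩, fun _ => rfl, fun _ => rfl⟩ :
        {a : ι // a ∉ (∅ : Finset ι)} ≃ ι) A, Equiv.coe_fn_mk]
  | succ k ih =>
    intro ι _ _ A d s hs
    have hsne : s.Nonempty := Finset.card_pos.mp (by omega)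
    obtain ⟨i, hi⟩ := hsne
    set M := pwMat A d s with hM
    have hblock := Matrix.twoBlockTriangular_det' M (fun a => a = i) (by
      rintro a rfl b hb
      simp only [M, pwMat, if_pos hi]
      rw [if_neg (fun h => hb h.symm)])
    beta_reduce at hblock
    letI : Subsingleton {a : ι // a = i} :=
      ⟨fun x y => Subtype.ext (x.2.trans y.2.symm)⟩
    have h1 : (M.toSquareBlockProp (fun a => a = i)).det = d i := by
      rw [Matrix.det_eq_elem_of_subsingleton _ ⟨i, rfl⟩]
      show pwMat A d s i i = d i
      simp [pwMat, hi]
    have h2 : M.toSquareBlockProp (fun a => ¬ a = i) =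
        pwMat (A.submatrix (Subtype.val : {a : ι // ¬ a = i} → ι) Subtype.val)
          (fun a => d a.1) (s.subtype (fun a => ¬ a = i)) := by
      funext a b
      show M a.1 b.1 = _
      simp only [pwMat, M, Finset.mem_subtype, Matrix.submatrix_apply]
      by_cases h : (a : ι) ∈ s
      · rw [if_pos h, if_pos h]
        by_cases hab : a = b
        · rw [if_pos (by rw [hab]), if_pos hab]
        · rw [if_neg (fun h' => hab (Subtype.ext h')), if_neg hab]
      · rw [if_neg h, if_neg h]
    have hcard : (s.subtype (fun a => ¬ a = i)).card = k := by
      rw [Finset.card_subtype]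
      have : s.filter (fun a => ¬ a = i) = s.erase i := by
        ext a; simp [Finset.mem_erase, and_comm, Ne]
      rw [this, Finset.card_erase_of_mem hi, hs]
      omega
    have h3 := ih (A.submatrix (Subtype.val : {a : ι // ¬ a = i} → ι) Subtype.val)
      (fun a => d a.1) (s.subtype (fun a => ¬ a = i)) hcard
    have hprod : (∏ a ∈ s.subtype (fun a => ¬ a = i), d a.1) = ∏ a ∈ s.erase i, d a := by
      rw [Finset.prod_subtype_eq_prod_filter]
      congr 1
      ext a; simp [Finset.mem_erase, and_comm, Ne]
    have h4 : ((A.submatrix (Subtype.val : {a : ι // ¬ a = i} → ι) Subtype.val).submatrix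
          (Subtype.val : {b : {a : ι // ¬ a = i} // b ∉ s.subtype (fun a => ¬ a = i)}
            → {a : ι // ¬ a = i}) Subtype.val).det
        = (A.submatrix (Subtype.val : {a : ι // a ∉ s} → ι) Subtype.val).det := by
      rw [Matrix.submatrix_submatrix]
      let e : {b : {a : ι // ¬ a = i} // b ∉ s.subtype (fun a => ¬ a = i)} ≃ {a : ι // a ∉ s} :=
        ⟨fun b => ⟨b.1.1, fun hb => b.2 (Finset.mem_subtype.2 hb)⟩,
         fun a => ⟨⟨a.1, fun h => a.2 (h ▸ hi)⟩, by intro hb; exact a.2 (by simpa using hb)⟩,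
         fun _ => rfl, fun _ => rfl⟩
      exact det_submatrix_comp_equiv A e Subtype.val
    rw [h2, h3, h4, hprod] at hblock
    rw [hblock, ← Finset.mul_prod_erase _ _ hi, mul_assoc]
    congr 1
    convert h1 using 2

lemma pwMat_det {ι : Type u} [Fintype ι] [DecidableEq ι]
    (A : Matrix ι ι ℝ) (d : ι → ℝ) (s : Finset ι) :
    (pwMat A d s).det =
      (∏ i ∈ s, d i) * (A.submatrix (Subtype.val : {a // a ∉ s} → ι) Subtype.val).det :=
  pwMat_det_aux s.card A d s rfl


variable {ι : Type u} [Fintype ι] [DecidableEq ι]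

lemma det_add_diagonal_expand (A : Matrix ι ι ℝ) (d : ι → ℝ) :
    (A + Matrix.diagonal d).det = ∑ s : Finset ι, (pwMat A d s).det := by
  have h := MultilinearMap.map_add_univ
    ((Matrix.detRowAlternating : (ι → ℝ) [⋀^ι]→ₗ[ℝ] ℝ).toMultilinearMap)
    (fun i => Matrix.diagonal d i) (fun i => A i)
  have e1 : (A + Matrix.diagonal d) =
      ((fun i => Matrix.diagonal d i) + fun i => A i : ι → ι → ℝ) := by
    funext i j
    simp [add_comm]
  have e2 : ∀ s : Finset ι,
      (s.piecewise (fun i => Matrix.diagonal d i) (fun i => A i) : ι → ι → ℝ)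
        = pwMat A d s := by
    intro s
    funext i j
    by_cases h : i ∈ s <;> simp [Finset.piecewise, pwMat, h, Matrix.diagonal_apply]
  show Matrix.detRowAlternating (A + Matrix.diagonal d) = _
  rw [e1]
  rw [show (Matrix.detRowAlternating ((fun i => Matrix.diagonal d i) + fun i => A i : ι → ι → ℝ))
    = (Matrix.detRowAlternating : (ι → ℝ) [⋀^ι]→ₗ[ℝ] ℝ).toMultilinearMap
        ((fun i => Matrix.diagonal d i) + fun i => A i) from rfl, h]
  refine Finset.sum_congr rfl fun s _ => ?_
  rw [← e2 s]
  rfl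

lemma det_add_diagonal_pos (A : Matrix ι ι ℝ) (d : ι → ℝ) (hd : ∀ i, 0 ≤ d i)
    (hP : ∀ s : Finset ι,
      0 < (A.submatrix (Subtype.val : {a // a ∉ s} → ι) Subtype.val).det) :
    0 < (A + Matrix.diagonal d).det := by
  rw [det_add_diagonal_expand]
  apply Finset.sum_pos'
  · intro s _
    rw [pwMat_det]
    exact mul_nonneg (Finset.prod_nonneg fun i _ => hd i) (hP s).le
  · refine ⟨∅, Finset.mem_univ _, ?_⟩
    rw [pwMat_det]
    simpa using hP ∅

lemma det_pos_of_sign (B : Matrix ι ι ℝ)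
    (hB : ∀ y : ι → ℝ, (∀ i, y i * B.mulVec y i ≤ 0) → y = 0) : 0 < B.det := by
  set f : ℝ → Matrix ι ι ℝ := fun t => (1 - t) • (1 : Matrix ι ι ℝ) + t • B with hf
  have hcont : Continuous fun t => (f t).det := by
    apply Continuous.matrix_det
    exact ((continuous_const.sub continuous_id).smul continuous_const).add
      (continuous_id.smul continuous_const)
  have hne : ∀ t ∈ Set.Icc (0:ℝ) 1, (f t).det ≠ 0 := by
    rintro t ⟨ht0, ht1⟩ h0
    obtain ⟨y, hy0, hy⟩ := (Matrix.exists_mulVec_eq_zero_iff).2 h0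
    have key : ∀ i, (1 - t) * y i + t * B.mulVec y i = 0 := by
      intro i
      have := congrFun hy i
      simpa [f, Matrix.add_mulVec, Matrix.smul_mulVec, Matrix.one_mulVec,
        Pi.smul_apply, smul_eq_mul] using this
    rcases eq_or_lt_of_le ht0 with h | h
    · apply hy0
      funext i
      have := key i
      rw [← h] at this
      simpa using this
    · apply hy0
      apply hB
      intro i
      have k2 : (1 - t) * (y i * y i) + t * (y i * (B *ᵥ y) i) = 0 := by
        linear_combination y i * key i
      nlinarith [mul_self_nonneg (y i), k2]
  have h0 : (f 0).det = 1 := by simp [f]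
  have h1 : f 1 = B := by simp [f]
  rcases lt_trichotomy B.det 0 with hlt | heq | hgt
  · exfalso
    have himg := intermediate_value_Icc' (by norm_num : (0:ℝ) ≤ 1) hcont.continuousOn
    have : (0:ℝ) ∈ Set.Icc ((f 1).det) ((f 0).det) := by
      rw [h0, h1]; exact ⟨hlt.le, by norm_num⟩
    obtain ⟨t, ht, hft⟩ := himg this
    exact hne t ht hft
  · exact absurd (h1 ▸ heq) (hne 1 (by norm_num))
  · exact hgt


end PMatrixAux

theorem stmt0 {n : ℕ} (A : Matrix (Fin n) (Fin n) ℝ) :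
    IsPMatrix A ↔ ∀ x : Fin n → ℝ, (∀ i, x i * A.mulVec x i ≤ 0) → x = 0 := by
  classical
  constructor
  · -- P-matrix implies sign condition
    intro hP x hx
    by_contra hx0
    set s : Finset (Fin n) := Finset.univ.filter (fun i => x i ≠ 0) with hs
    set B : Matrix s s ℝ := A.submatrix (fun i : s => (i : Fin n)) (fun j : s => (j : Fin n))
      with hB
    set y : s → ℝ := fun j => x j.1 with hy
    have hymem : ∀ j : s, x j.1 ≠ 0 := fun j => (Finset.mem_filter.mp j.2).2
    have hxoff : ∀ j : Fin n, j ∉ s → x j = 0 := by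
      intro j hj; by_contra h; exact hj (by rw [hs]; simp [h])
    -- B.mulVec y agrees with A.mulVec x on s
    have hmv : ∀ i : s, B.mulVec y i = A.mulVec x i.1 := by
      intro i
      show ∑ j : s, B i j * y j = ∑ j : Fin n, A i.1 j * x j
      rw [show (∑ j : s, B i j * y j) = ∑ j : s, A i.1 j.1 * x j.1 from rfl,
        Finset.sum_coe_sort s (fun j => A i.1 j * x j)]
      exact Finset.sum_subset (Finset.subset_univ s)
        (fun j _ hj => by rw [hxoff j hj, mul_zero])
    set d : s → ℝ := fun j => -(A.mulVec x j.1) / x j.1 with hd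
    have hd0 : ∀ j : s, 0 ≤ d j := by
      intro j
      have hb := hymem j
      have hab : x j.1 * A.mulVec x j.1 ≤ 0 := hx j.1
      have : d j = -(x j.1 * A.mulVec x j.1) / (x j.1 * x j.1) := by
        rw [hd]
        field_simp
      rw [this]
      exact div_nonneg (by linarith) (mul_self_nonneg _)
    have hsing : (B + Matrix.diagonal d).mulVec y = 0 := by
      funext i
      rw [Matrix.add_mulVec]
      show B.mulVec y i + (Matrix.diagonal d).mulVec y i = 0
      rw [Matrix.mulVec_diagonal, hmv i]
      show A.mulVec x i.1 + (-(A.mulVec x i.1) / x i.1) * x i.1 = 0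
      rw [div_mul_cancel₀ _ (hymem i)]
      ring
    have hy0 : y ≠ 0 := by
      obtain ⟨i, hi⟩ := Function.ne_iff.1 hx0
      have hmem : i ∈ s := by rw [hs]; simpa using hi
      intro h
      exact hi (by simpa using congrFun h ⟨i, hmem⟩)
    have hdet0 : (B + Matrix.diagonal d).det = 0 :=
      Matrix.exists_mulVec_eq_zero_iff.1 ⟨y, hy0, hsing⟩
    have hdetpos : 0 < (B + Matrix.diagonal d).det := by
      apply det_add_diagonal_pos B d hd0
      intro t
      set u : Finset (Fin n) := s.filter (fun i => ∀ h : i ∈ s, (⟨i, h⟩ : s) ∉ t) with hu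
      let e : {a : s // a ∉ t} ≃ u :=
        ⟨fun a => ⟨a.1.1, by
            rw [hu, Finset.mem_filter]
            exact ⟨a.1.2, fun _ => a.2⟩⟩,
         fun b => ⟨⟨b.1, (Finset.mem_filter.1 b.2).1⟩,
            (Finset.mem_filter.1 b.2).2 _⟩,
         fun _ => rfl, fun _ => rfl⟩
      have h5 : (B.submatrix (Subtype.val : {a : s // a ∉ t} → s) Subtype.val).det
          = (A.submatrix (fun i : u => (i : Fin n)) (fun j : u => (j : Fin n))).det :=
        det_submatrix_comp_equiv A e (fun i : u => (i : Fin n))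
      rw [h5]
      exact hP u
    rw [hdet0] at hdetpos
    exact lt_irrefl 0 hdetpos
  · -- sign condition implies P-matrix
    intro hcond s
    apply det_pos_of_sign
    intro y hy
    set x : Fin n → ℝ := fun i => if h : i ∈ s then y ⟨i, h⟩ else 0 with hx
    have hxy : ∀ j : s, x j.1 = y j := fun j => dif_pos j.2
    have hAx : ∀ (i : Fin n) (hi : i ∈ s),
        A.mulVec x i = (A.submatrix (fun i : s => (i : Fin n))
          (fun j : s => (j : Fin n))).mulVec y ⟨i, hi⟩ := by
      intro i hi
      show ∑ j : Fin n, A i j * x j = ∑ j : s, A i j.1 * y j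
      rw [show (∑ j : s, A i j.1 * y j) = ∑ j : s, A i j.1 * x j.1 by
        exact Finset.sum_congr rfl fun j _ => by rw [hxy j],
        Finset.sum_coe_sort s (fun j => A i j * x j)]
      exact (Finset.sum_subset (Finset.subset_univ s)
        (fun j _ hj => by rw [hx]; simp [dif_neg hj])).symm
    have hxall : ∀ i, x i * A.mulVec x i ≤ 0 := by
      intro i
      by_cases hi : i ∈ s
      · rw [hAx i hi, show x i = y ⟨i, hi⟩ from hxy ⟨i, hi⟩]
        exact hy ⟨i, hi⟩
      · rw [hx]; simp [dif_neg hi]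
    have hx0 := hcond x hxall
    funext j
    rw [← hxy j, hx0]
    rfl
end

section
/- Let A, B ∈ ℝ^{n×n} and x ∈ ℝ^n. Choose z ∈ {±1}^n with z_i = 1 if x_i ≥ 0 and z_i = −1 if x_i < 0. Then for every C in the interval hull I(A,B) and every index i, x_i (Cx)_i ≥ x_i (I_z x)_i, where I_z = I_c − D_z Δ D_z with I_c = (A+B)/2, Δ = (I_u − I_l)/2, D_z = diag(z). -/
open Matrix Finset

theorem stmt3 {n : ℕ} (A B : Matrix (Fin n) (Fin n) ℝ) (x : Fin n → ℝ)
    (z : Fin n → ℝ) (hz : ∀ i, (0 ≤ x i → z i = 1) ∧ (x i < 0 → z i = -1)) :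
    ∀ C ∈ IntervalHull A B, ∀ i, x i * (Iz A B z).mulVec x i ≤ x i * C.mulVec x i := by
  intro C hC i
  have hzx : ∀ k, z k * x k = |x k| := by
    intro k
    rcases le_or_gt 0 (x k) with h | h
    · rw [(hz k).1 h, one_mul, abs_of_nonneg h]
    · rw [(hz k).2 h, abs_of_neg h]; ring
  simp only [Matrix.mulVec, dotProduct, Finset.mul_sum]
  apply Finset.sum_le_sum
  intro j _
  obtain ⟨t, ⟨ht0, ht1⟩, hCij⟩ := hC i j
  have hIz : Iz A B z i j = Ic A B i j - z i * Dlt A B i j * z j := by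
    simp [Iz, Matrix.sub_apply, Matrix.mul_apply, Matrix.diagonal, Finset.sum_ite_eq,
      Finset.sum_ite_eq']
  have habs : |C i j - Ic A B i j| ≤ Dlt A B i j := by
    rw [hCij, abs_le]
    simp only [Ic, Dlt, Iu, Il]
    rcases le_total (A i j) (B i j) with h | h
    · rw [max_eq_right h, min_eq_left h]; constructor <;> nlinarith
    · rw [max_eq_left h, min_eq_right h]; constructor <;> nlinarith
  rw [hIz]
  have key : -( |x i| * |x j| * Dlt A B i j) ≤ x i * x j * (C i j - Ic A B i j) := by
    have h1 : |x i * x j * (C i j - Ic A B i j)| ≤ |x i| * |x j| * Dlt A B i j := by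
      rw [abs_mul, abs_mul]
      exact mul_le_mul_of_nonneg_left habs (mul_nonneg (abs_nonneg _) (abs_nonneg _))
    linarith [neg_abs_le (x i * x j * (C i j - Ic A B i j))]
  have hi := hzx i
  have hj := hzx j
  have e1 : x i * ((Ic A B i j - z i * Dlt A B i j * z j) * x j)
      = x i * x j * Ic A B i j - (z i * x i) * (z j * x j) * Dlt A B i j := by ring
  rw [e1, hi, hj]
  nlinarith [key]
end

section
/- A matrix A ∈ ℝ^{n×n} is an N-matrix of the second category if and only if all entries of A are negative and for every x ∈ ℝ^n with x_i (Ax)_i ≤ 0 for all i, one has x ≤ 0 or x ≥ 0. -/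
open Matrix Finset

def NegMinors {k : ℕ} (A : Matrix (Fin k) (Fin k) ℝ) : Prop :=
  ∀ (m : ℕ) (f : Fin m → Fin k), m ≠ 0 → Function.Injective f → (A.submatrix f f).det < 0

lemma negMinors_submatrix {k r : ℕ} {A : Matrix (Fin k) (Fin k) ℝ} (hA : NegMinors A)
    {g : Fin r → Fin k} (hg : Function.Injective g) : NegMinors (A.submatrix g g) := by
  intro m f hm hf
  rw [Matrix.submatrix_submatrix]
  exact hA m (g ∘ f) hm (hg.comp hf)

lemma det_updateRow_single {m : ℕ} (M : Matrix (Fin (m+1)) (Fin (m+1)) ℝ) (j : Fin (m+1)) (c : ℝ) :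
    (M.updateRow j (Pi.single j c)).det = c * (M.submatrix j.succAbove j.succAbove).det := by
  rw [Matrix.det_succ_row _ j, Finset.sum_eq_single j]
  · rw [Matrix.submatrix_updateRow_succAbove]
    rw [Matrix.updateRow_self]
    simp [Even.neg_one_pow (Even.add_self (j : ℕ))]
  · intro b _ hb
    rw [Matrix.updateRow_self]
    rw [Pi.single_eq_of_ne hb]
    ring
  · intro h; exact absurd (Finset.mem_univ j) h

lemma det_add_diag_neg : ∀ (N k : ℕ) (A : Matrix (Fin k) (Fin k) ℝ), NegMinors A →
    ∀ d : Fin k → ℝ, (∀ i, 0 ≤ d i) → ∀ k₀ : Fin k, d k₀ = 0 →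
    k + (univ.filter (fun i => d i ≠ 0)).card ≤ N → (A + Matrix.diagonal d).det < 0 := by
  intro N
  induction N with
  | zero =>
    intro k A _ d _ k₀ _ hle
    have hk0 : k = 0 := by omega
    subst hk0
    exact k₀.elim0
  | succ N ih =>
    intro k A hA d hd k₀ hk₀ hle
    by_cases hzero : ∀ i, d i = 0
    · have hd0 : d = 0 := funext hzero
      have hdz : Matrix.diagonal d = 0 := by
        ext i i'; by_cases h : i = i' <;> simp [Matrix.diagonal_apply, h, hzero]
      rw [hdz, add_zero]
      have hk : k ≠ 0 := by rintro rfl; exact k₀.elim0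
      simpa using hA k id hk Function.injective_id
    · push_neg at hzero
      obtain ⟨j, hj⟩ := hzero
      have hjk₀ : j ≠ k₀ := fun h => hj (h ▸ hk₀)
      cases k with
      | zero => exact k₀.elim0
      | succ m =>
        set d' : Fin (m+1) → ℝ := Function.update d j 0 with hd'def
        have hd'j : d' j = 0 := Function.update_self j 0 d
        have hd'ne : ∀ i, i ≠ j → d' i = d i := fun i hi => Function.update_of_ne hi 0 d
        have hd'nonneg : ∀ i, 0 ≤ d' i := by
          intro i
          by_cases h : i = j
          · rw [h, hd'j]
          · rw [hd'ne i h]; exact hd i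
        have hd'k₀ : d' k₀ = 0 := by rw [hd'ne k₀ (Ne.symm hjk₀)]; exact hk₀
        have hfilter : (univ.filter fun i => d' i ≠ 0) = (univ.filter fun i => d i ≠ 0).erase j := by
          ext i
          simp only [Finset.mem_filter, Finset.mem_univ, true_and, Finset.mem_erase]
          constructor
          · intro h
            have hij : i ≠ j := fun he => h (he ▸ hd'j)
            exact ⟨hij, (hd'ne i hij) ▸ h⟩
          · rintro ⟨hij, h⟩
            rw [hd'ne i hij]; exact h
        have hjmem : j ∈ univ.filter fun i => d i ≠ 0 := by
          simp only [Finset.mem_filter, Finset.mem_univ, true_and]; exact hj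
        have hcard : (univ.filter fun i => d' i ≠ 0).card + 1 = (univ.filter fun i => d i ≠ 0).card := by
          rw [hfilter, Finset.card_erase_of_mem hjmem]
          have : 1 ≤ (univ.filter fun i => d i ≠ 0).card := Finset.card_pos.mpr ⟨j, hjmem⟩
          omega
        have hrow : A + Matrix.diagonal d
            = (A + Matrix.diagonal d').updateRow j ((A + Matrix.diagonal d') j + Pi.single j (d j)) := by
          ext i i'
          by_cases h : i = j
          · subst h
            rw [Matrix.updateRow_self]
            simp only [Matrix.add_apply, Pi.add_apply, Matrix.diagonal_apply, Pi.single_apply]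
            by_cases h' : i = i'
            · subst h'; simp [hd'j]
            · rw [if_neg h', if_neg h', if_neg (fun he => h' he.symm)]; ring
          · rw [Matrix.updateRow_ne h]
            simp only [Matrix.add_apply, Matrix.diagonal_apply]
            by_cases h' : i = i'
            · subst h'; rw [if_pos rfl, if_pos rfl, hd'ne i h]
            · rw [if_neg h', if_neg h']
        rw [hrow, Matrix.det_updateRow_add, Matrix.updateRow_eq_self,
          det_updateRow_single]
        have hmain : (A + Matrix.diagonal d').det < 0 := by
          apply ih (m+1) A hA d' hd'nonneg k₀ hd'k₀
          omega
        have hsub : (A + Matrix.diagonal d').submatrix j.succAbove j.succAbove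
            = A.submatrix j.succAbove j.succAbove + Matrix.diagonal (d' ∘ j.succAbove) := by
          ext a b
          simp only [Matrix.submatrix_apply, Matrix.add_apply, Matrix.diagonal_apply,
            Function.comp_apply]
          by_cases h : a = b
          · subst h; simp
          · rw [if_neg (fun he => h (Fin.succAbove_right_injective he)), if_neg h]
        have hminor : ((A + Matrix.diagonal d').submatrix j.succAbove j.succAbove).det < 0 := by
          rw [hsub]
          obtain ⟨z, hz⟩ := Fin.exists_succAbove_eq (Ne.symm hjk₀)
          apply ih m _ (negMinors_submatrix hA Fin.succAbove_right_injective)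
            _ (fun i => hd'nonneg _) z (by simpa [hz] using hd'k₀)
          have hinj : Set.InjOn j.succAbove ↑(univ.filter fun i => d' (j.succAbove i) ≠ 0) :=
            Fin.succAbove_right_injective.injOn
          have hmap : ∀ i ∈ (univ.filter fun i => d' (j.succAbove i) ≠ 0),
              j.succAbove i ∈ (univ.filter fun i => d' i ≠ 0) := by
            intro i hi
            simp only [Finset.mem_filter, Finset.mem_univ, true_and] at hi ⊢
            exact hi
          have := Finset.card_le_card_of_injOn _ hmap hinj
          omega
        nlinarith [hd j, lt_of_le_of_ne (hd j) (Ne.symm hj)]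

lemma strict_sign {k : ℕ} (A : Matrix (Fin k) (Fin k) ℝ) (hA : NegMinors A)
    (z : Fin k → ℝ) (hz : ∀ i, z i ≠ 0) (hc : ∀ i, z i * A.mulVec z i ≤ 0) :
    ∀ i, z i * A.mulVec z i < 0 := by
  intro k₀
  rcases lt_or_eq_of_le (hc k₀) with h | h
  · exact h
  exfalso
  set t : Fin k → ℝ := fun i => (-(A.mulVec z i * z i)) / (z i)^2 with ht
  have htnn : ∀ i, 0 ≤ t i := by
    intro i
    apply div_nonneg _ (sq_nonneg _)
    nlinarith [hc i]
  have htk₀ : t k₀ = 0 := by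
    have h0 : A.mulVec z k₀ * z k₀ = 0 := by nlinarith [h]
    simp [ht, h0]
  have htz : ∀ i, t i * z i = -(A.mulVec z i) := by
    intro i
    have hz2 : z i ≠ 0 := hz i
    simp only [ht]
    rw [div_mul_eq_mul_div, div_eq_iff (pow_ne_zero 2 hz2)]
    ring
  have hMz : (A + Matrix.diagonal t).mulVec z = 0 := by
    funext i
    rw [Matrix.add_mulVec]
    simp only [Pi.add_apply, Matrix.mulVec_diagonal, Pi.zero_apply]
    rw [htz i]; ring
  have hdet0 : (A + Matrix.diagonal t).det = 0 :=
    Matrix.exists_mulVec_eq_zero_iff.mp ⟨z, fun h0 => hz k₀ (congrFun h0 k₀), hMz⟩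
  have := det_add_diag_neg (k + (univ.filter (fun i => t i ≠ 0)).card) k A hA t htnn k₀ htk₀ le_rfl
  linarith

lemma mulVec_update {k : ℕ} (A : Matrix (Fin k) (Fin k) ℝ) (z : Fin k → ℝ) (k₀ : Fin k) (v : ℝ)
    (i : Fin k) : A.mulVec (Function.update z k₀ v) i = A.mulVec z i + A i k₀ * (v - z k₀) := by
  simp only [Matrix.mulVec, dotProduct]
  have hterm : ∀ j, A i j * Function.update z k₀ v j
      = A i j * z j + (if j = k₀ then A i k₀ * (v - z k₀) else 0) := by
    intro j
    rcases eq_or_ne j k₀ with rfl | h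
    · simp [Function.update_self]; ring
    · simp [Function.update_of_ne h, h]
  simp_rw [hterm]
  rw [Finset.sum_add_distrib, Finset.sum_ite_eq' univ k₀]
  simp

lemma mixed_contra {k : ℕ} (A : Matrix (Fin k) (Fin k) ℝ) (hA : NegMinors A)
    (hneg : ∀ i j, A i j < 0)
    (key : ∀ w : Fin k → ℝ, (∀ i, w i * A.mulVec w i ≤ 0) → (∃ i₀, w i₀ = 0) →
      (∀ i, w i ≤ 0) ∨ (∀ i, 0 ≤ w i))
    (z : Fin k → ℝ) (hz0 : ∀ i, z i ≠ 0) (hc : ∀ i, z i * A.mulVec z i ≤ 0)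
    (k₀ a q : Fin k) (hk₀ : 0 < z k₀) (ha : 0 < z a) (hak₀ : a ≠ k₀) (hq : z q < 0) : False := by
  have strict := strict_sign A hA z hz0 hc
  set Bd : Finset (Fin k) := univ.filter (fun i => 0 < z i * z k₀) with hBd
  have hk₀Bd : k₀ ∈ Bd := by simp [hBd, mul_pos hk₀ hk₀]
  set c : Fin k → ℝ := fun i => if i = k₀ then -A k₀ k₀ * (z k₀)^2 else -(z i * A i k₀ * z k₀)
    with hcdef
  have hcpos : ∀ i ∈ Bd, 0 < c i := by
    intro i hi
    rcases eq_or_ne i k₀ with rfl | h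
    · simp only [hcdef, if_pos rfl]
      have := hneg i i
      nlinarith [sq_pos_of_ne_zero (hz0 i)]
    · have hzz : 0 < z i * z k₀ := by simpa [hBd] using hi
      simp only [hcdef, if_neg h]
      nlinarith [hneg i k₀]
  set r : Fin k → ℝ := fun i => (-(z i * A.mulVec z i)) / c i with hrdef
  have hrpos : ∀ i ∈ Bd, 0 < r i := fun i hi => div_pos (neg_pos.2 (strict i)) (hcpos i hi)
  have hrc : ∀ i ∈ Bd, r i * c i = -(z i * A.mulVec z i) := fun i hi =>
    div_mul_cancel₀ _ (ne_of_gt (hcpos i hi))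
  set mval := Bd.inf' ⟨k₀, hk₀Bd⟩ r with hm
  set ε := min mval 1 with hεdef
  have hε0 : 0 < ε := lt_min ((Finset.lt_inf'_iff _).2 (fun b hb => hrpos b hb)) one_pos
  have hε1 : ε ≤ 1 := min_le_right _ _
  have hεle : ∀ i ∈ Bd, ε ≤ r i := fun i hi => le_trans (min_le_left _ _) (Finset.inf'_le _ hi)
  set s := 1 - ε with hs
  have hs0 : 0 ≤ s := by simp [hs]; linarith
  set z' := Function.update z k₀ (s * z k₀) with hz'
  have hAz' : ∀ i, A.mulVec z' i = A.mulVec z i - ε * (A i k₀ * z k₀) := by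
    intro i
    rw [hz', mulVec_update, hs]
    ring
  have hval : ∀ i, i ≠ k₀ → z' i * A.mulVec z' i = z i * A.mulVec z i + ε * c i := by
    intro i hik
    rw [hz', Function.update_of_ne hik, hAz' i]
    simp only [hcdef, if_neg hik]
    ring
  have hvalk : z' k₀ * A.mulVec z' k₀ = s * (z k₀ * A.mulVec z k₀ + ε * c k₀) := by
    rw [hz', Function.update_self, hAz' k₀]
    simp only [hcdef, if_pos rfl]
    ring
  have hbound : ∀ i ∈ Bd, z i * A.mulVec z i + ε * c i ≤ 0 := by
    intro i hi
    have h1 : ε * c i ≤ r i * c i := mul_le_mul_of_nonneg_right (hεle i hi) (hcpos i hi).le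
    rw [hrc i hi] at h1
    linarith
  have hcond' : ∀ i, z' i * A.mulVec z' i ≤ 0 := by
    intro i
    rcases eq_or_ne i k₀ with rfl | hik
    · rw [hvalk]
      exact mul_nonpos_of_nonneg_of_nonpos hs0 (hbound i hk₀Bd)
    · rw [hval i hik]
      by_cases hi : i ∈ Bd
      · exact hbound i hi
      · have hzz : z i * z k₀ < 0 := by
          have h1 : ¬ 0 < z i * z k₀ := by simpa [hBd] using hi
          rcases lt_trichotomy (z i * z k₀) 0 with h | h | h
          · exact h
          · exact absurd (mul_ne_zero (hz0 i) (hz0 k₀)) (by simp [h])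
          · exact absurd h h1
        have hci : c i < 0 := by
          simp only [hcdef, if_neg hik]
          nlinarith [hneg i k₀]
        nlinarith [hc i, hε0]
  rcases le_or_gt 1 mval with hcase | hcase
  · -- ε = 1, s = 0
    have hεeq : ε = 1 := min_eq_right hcase
    have hz'k₀ : z' k₀ = 0 := by rw [hz', Function.update_self, hs, hεeq]; ring
    have hqk : q ≠ k₀ := fun e => absurd (e ▸ hq) (not_lt.2 hk₀.le)
    rcases key z' hcond' ⟨k₀, hz'k₀⟩ with h | h
    · have := h a
      rw [hz', Function.update_of_ne hak₀] at this
      linarith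
    · have := h q
      rw [hz', Function.update_of_ne hqk] at this
      linarith
  · -- ε = mval, s > 0
    have hεeq : ε = mval := min_eq_left hcase.le
    have hspos : 0 < s := by rw [hs]; rw [hεdef, min_eq_left hcase.le]; linarith
    obtain ⟨i₀, hi₀Bd, hi₀⟩ := Finset.exists_mem_eq_inf' ⟨k₀, hk₀Bd⟩ r
    have hz'0 : ∀ i, z' i ≠ 0 := by
      intro i
      rcases eq_or_ne i k₀ with rfl | h
      · rw [hz', Function.update_self]
        exact mul_ne_zero (ne_of_gt hspos) (hz0 i)
      · rw [hz', Function.update_of_ne h]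
        exact hz0 i
    have hstrict' := strict_sign A hA z' hz'0 hcond'
    have hεr : ε * c i₀ = -(z i₀ * A.mulVec z i₀) := by
      rw [hεeq, hm, hi₀]
      exact hrc i₀ hi₀Bd
    rcases eq_or_ne i₀ k₀ with rfl | h
    · have h0 : z' i₀ * A.mulVec z' i₀ = 0 := by
        rw [hvalk, hεr]; ring
      exact absurd h0 (ne_of_lt (hstrict' i₀))
    · have h0 : z' i₀ * A.mulVec z' i₀ = 0 := by
        rw [hval i₀ h, hεr]; ring
      exact absurd h0 (ne_of_lt (hstrict' i₀))

lemma forward_main : ∀ (k : ℕ) (A : Matrix (Fin k) (Fin k) ℝ), NegMinors A →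
    (∀ i j, A i j < 0) → ∀ z : Fin k → ℝ, (∀ i, z i * A.mulVec z i ≤ 0) →
    (∀ i, z i ≤ 0) ∨ (∀ i, 0 ≤ z i) := by
  intro k
  induction k using Nat.strong_induction_on with
  | _ k ih =>
  intro A hA hneg z hc
  have key : ∀ w : Fin k → ℝ, (∀ i, w i * A.mulVec w i ≤ 0) → (∃ i₀, w i₀ = 0) →
      (∀ i, w i ≤ 0) ∨ (∀ i, 0 ≤ w i) := by
    intro w hw hex
    obtain ⟨i₀, hi₀⟩ := hex
    cases k with
    | zero => exact Or.inl (fun i => i.elim0)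
    | succ m =>
      set sa := (i₀ : Fin (m+1)).succAbove with hsa
      have hsum : ∀ i, (A.submatrix sa sa).mulVec (w ∘ sa) i = A.mulVec w (sa i) := by
        intro i
        simp only [Matrix.mulVec, dotProduct, Matrix.submatrix_apply,
          Function.comp_apply]
        rw [Fin.sum_univ_succAbove (fun j => A (sa i) j * w j) i₀]
        simp [hi₀, hsa]
      have hres := ih m (Nat.lt_succ_self m) (A.submatrix sa sa)
        (negMinors_submatrix hA Fin.succAbove_right_injective)
        (fun i j => hneg _ _) (w ∘ sa)
        (fun i => by rw [Function.comp_apply, hsum]; exact hw (sa i))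
      rcases hres with h | h
      · left
        intro i
        rcases eq_or_ne i i₀ with rfl | hne
        · rw [hi₀]
        · obtain ⟨j, hj⟩ := Fin.exists_succAbove_eq hne
          rw [← hj]; exact h j
      · right
        intro i
        rcases eq_or_ne i i₀ with rfl | hne
        · rw [hi₀]
        · obtain ⟨j, hj⟩ := Fin.exists_succAbove_eq hne
          rw [← hj]; exact h j
  by_cases hz0 : ∃ i₀, z i₀ = 0
  · exact key z hc hz0
  push_neg at hz0
  by_cases hposv : ∀ i, 0 ≤ z i
  · exact Or.inr hposv
  by_cases hnegv : ∀ i, z i ≤ 0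
  · exact Or.inl hnegv
  exfalso
  push_neg at hposv hnegv
  obtain ⟨q, hq⟩ := hposv
  obtain ⟨p, hp⟩ := hnegv
  by_cases h2p : ∃ b, b ≠ p ∧ 0 < z b
  · obtain ⟨b, hbp, hb⟩ := h2p
    exact mixed_contra A hA hneg key z hz0 hc p b q hp hb hbp hq
  by_cases h2q : ∃ b, b ≠ q ∧ z b < 0
  · obtain ⟨b, hbq, hb⟩ := h2q
    have hcneg : ∀ i, (-z) i * A.mulVec (-z) i ≤ 0 := by
      intro i
      rw [Matrix.mulVec_neg]
      simpa using hc i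
    exact mixed_contra A hA hneg key (-z) (fun i => neg_ne_zero.2 (hz0 i)) hcneg q b p
      (by simpa using hq) (by simpa using hb) hbq (by simpa using hp)
  push_neg at h2p h2q
  have hpq : p ≠ q := fun e => absurd (e ▸ hp) (not_lt.2 hq.le)
  have huniv : ∀ i, i = p ∨ i = q := by
    intro i
    by_contra hcon
    push_neg at hcon
    have h1 := h2p i hcon.1
    have h2 := h2q i hcon.2
    rcases lt_trichotomy (z i) 0 with h | h | h
    · linarith
    · exact hz0 i h
    · linarith
  have hU : (univ : Finset (Fin k)) = {p, q} := by
    ext i; simp [huniv i]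
  have hsum2 : ∀ (f : Fin k → ℝ), ∑ j, f j = f p + f q := by
    intro f; rw [hU, Finset.sum_pair hpq]
  have hinj : Function.Injective ![p, q] := by
    intro x y hxy
    fin_cases x <;> fin_cases y <;> simp_all
  have hdet2 := hA 2 ![p, q] (by norm_num) hinj
  rw [Matrix.det_fin_two] at hdet2
  simp only [Matrix.submatrix_apply, Matrix.cons_val_zero, Matrix.cons_val_one,
    Matrix.head_cons] at hdet2
  have hmv : ∀ i, A.mulVec z i = A i p * z p + A i q * z q := by
    intro i
    simp only [Matrix.mulVec, dotProduct]
    exact hsum2 _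
  have hcp := hc p; have hcq := hc q
  rw [hmv] at hcp hcq
  have e0 : A p p * z p + A p q * z q ≤ 0 := by nlinarith [hcp, hp]
  have e1 : 0 ≤ A q p * z p + A q q * z q := by nlinarith [hcq, hq]
  nlinarith [e0, e1, hdet2, hp, hq, mul_pos hp (neg_pos.2 hq), hneg p p, hneg q q, hneg p q,
    hneg q p, mul_pos (mul_pos hp (neg_pos.2 hq)) (mul_pos hp (neg_pos.2 hq))]

lemma converse_main : ∀ (m n : ℕ) (A : Matrix (Fin n) (Fin n) ℝ), (∀ i j, A i j < 0) →
    (∀ x : Fin n → ℝ, (∀ i, x i * A.mulVec x i ≤ 0) → (∀ i, x i ≤ 0) ∨ (∀ i, 0 ≤ x i)) →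
    ∀ f : Fin m → Fin n, m ≠ 0 → Function.Injective f → (A.submatrix f f).det < 0 := by
  intro m
  induction m using Nat.strong_induction_on with
  | _ m ih =>
  intro n A hneg hprop f hm hf
  set B := A.submatrix f f with hB
  have hBneg : ∀ i j, B i j < 0 := fun i j => hneg _ _
  classical
  have hBprop : ∀ x : Fin m → ℝ, (∀ i, x i * B.mulVec x i ≤ 0) →
      (∀ i, x i ≤ 0) ∨ (∀ i, 0 ≤ x i) := by
    intro x hx
    set y : Fin n → ℝ := fun j => if h : ∃ i, f i = j then x h.choose else 0 with hy
    have hyf : ∀ i, y (f i) = x i := by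
      intro i
      have hex : ∃ i', f i' = f i := ⟨i, rfl⟩
      simp only [hy, dif_pos hex]
      congr 1
      exact hf hex.choose_spec
    have hy0 : ∀ j, (¬ ∃ i, f i = j) → y j = 0 := by
      intro j hj; simp only [hy, dif_neg hj]
    have hmv : ∀ i, A.mulVec y (f i) = B.mulVec x i := by
      intro i
      simp only [Matrix.mulVec, dotProduct, hB, Matrix.submatrix_apply]
      rw [← Finset.sum_subset (Finset.subset_univ (univ.image f))]
      · rw [Finset.sum_image (fun a _ b _ h => hf h)]
        apply Finset.sum_congr rfl
        intro i' _
        rw [hyf]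
      · intro j _ hj
        have hnr : ¬ ∃ i', f i' = j := by simpa [Finset.mem_image] using hj
        rw [hy0 j hnr, mul_zero]
    have hycond : ∀ j, y j * A.mulVec y j ≤ 0 := by
      intro j
      by_cases h : ∃ i, f i = j
      · obtain ⟨i, rfl⟩ := h
        rw [hyf, hmv]
        exact hx i
      · rw [hy0 j h, zero_mul]
    rcases hprop y hycond with h | h
    · left; intro i; rw [← hyf i]; exact h (f i)
    · right; intro i; rw [← hyf i]; exact h (f i)
  by_contra hcon
  push_neg at hcon
  have hmain : ∀ w : Fin m → ℝ, B.mulVec w = 0 → (∀ i, 0 ≤ w i) → ∀ j₀, 0 < w j₀ → False := by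
    intro w hw hwnn j₀ hwj
    have hlt : B.mulVec w j₀ < 0 := by
      have hterm : ∀ j ∈ (univ : Finset (Fin m)), B j₀ j * w j ≤ (fun _ => (0:ℝ)) j :=
        fun j _ => mul_nonpos_of_nonpos_of_nonneg (hBneg j₀ j).le (hwnn j)
      have hstrict : B j₀ j₀ * w j₀ < 0 := mul_neg_of_neg_of_pos (hBneg j₀ j₀) hwj
      have := Finset.sum_lt_sum hterm ⟨j₀, Finset.mem_univ j₀, hstrict⟩
      simpa [Matrix.mulVec, dotProduct] using this
    rw [hw] at hlt
    simp at hlt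
  rcases eq_or_lt_of_le hcon with hdet0 | hdetpos
  · obtain ⟨v, hv0, hv⟩ := Matrix.exists_mulVec_eq_zero_iff.mpr hdet0.symm
    have hvcond : ∀ i, v i * B.mulVec v i ≤ 0 := by intro i; rw [hv]; simp
    obtain ⟨j₀, hj₀⟩ : ∃ j₀, v j₀ ≠ 0 := by
      by_contra hall; push_neg at hall; exact hv0 (funext hall)
    rcases hBprop v hvcond with h | h
    · have hnv : B.mulVec (-v) = 0 := by rw [Matrix.mulVec_neg, hv, neg_zero]
      exact hmain (-v) hnv (fun i => by simpa using h i) j₀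
        (by simpa using lt_of_le_of_ne (h j₀) hj₀)
    · exact hmain v hv h j₀ (lt_of_le_of_ne (h j₀) (Ne.symm hj₀))
  · cases m with
    | zero => exact hm rfl
    | succ m' =>
      cases m' with
      | zero =>
        rw [Matrix.det_fin_one] at hdetpos
        exact absurd hdetpos (not_lt.2 (hBneg 0 0).le)
      | succ m'' =>
        have hdetu : IsUnit B.det := isUnit_iff_ne_zero.2 (ne_of_gt hdetpos)
        have hBinv : B * B⁻¹ = 1 := Matrix.mul_nonsing_inv B hdetu
        have hdiag : ∀ i, B⁻¹ i i < 0 := by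
          intro i
          rw [Matrix.inv_def]
          simp only [Matrix.smul_apply, smul_eq_mul]
          have hadj : B.adjugate i i = (B.submatrix i.succAbove i.succAbove).det := by
            rw [Matrix.adjugate_apply, det_updateRow_single, one_mul]
          rw [hadj]
          have hminor : (B.submatrix i.succAbove i.succAbove).det < 0 := by
            have hres := ih (m''+1) (Nat.lt_succ_self _) n A hneg hprop
              (f ∘ i.succAbove) (by omega) (hf.comp Fin.succAbove_right_injective)
            rw [hB, Matrix.submatrix_submatrix]
            exact hres
          rw [Ring.inverse_eq_inv']
          exact mul_neg_of_pos_of_neg (inv_pos.2 hdetpos) hminor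
        have hmul : ∀ i j, B.mulVec (fun j' => B⁻¹ j' i) j
            = (1 : Matrix (Fin (m''+2)) (Fin (m''+2)) ℝ) j i := by
          intro i j
          rw [← hBinv, Matrix.mul_apply]
          simp [Matrix.mulVec, dotProduct]
        have hcols : ∀ i j, B⁻¹ j i ≤ 0 := by
          intro i j
          have hxcond : ∀ j', (fun j'' => B⁻¹ j'' i) j' * B.mulVec (fun j'' => B⁻¹ j'' i) j' ≤ 0 := by
            intro j'
            rw [hmul i j']
            rcases eq_or_ne j' i with rfl | h
            · rw [Matrix.one_apply_eq, mul_one]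
              exact (hdiag j').le
            · rw [Matrix.one_apply_ne h, mul_zero]
          rcases hBprop _ hxcond with h | h
          · exact h j
          · exact absurd (h i) (not_le.2 (hdiag i))
        have h01 : ((1 : Matrix (Fin (m''+2)) (Fin (m''+2)) ℝ) 0 1) = 0 :=
          Matrix.one_apply_ne (by simp)
        have hsum0 : ∑ k, B 0 k * B⁻¹ k 1 = 0 := by
          rw [← Matrix.mul_apply, hBinv, h01]
        have hterms : ∀ k ∈ (univ : Finset (Fin (m''+2))), 0 ≤ B 0 k * B⁻¹ k 1 :=
          fun k _ => by nlinarith [ (hBneg 0 k).le, hcols 1 k]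
        have hzero : ∀ k, B⁻¹ k 1 = 0 := by
          intro k
          have := (Finset.sum_eq_zero_iff_of_nonneg hterms).mp hsum0 k (Finset.mem_univ k)
          rcases mul_eq_zero.mp this with h | h
          · exact absurd h (ne_of_lt (hBneg 0 k))
          · exact h
        have h11 : ((1 : Matrix (Fin (m''+2)) (Fin (m''+2)) ℝ) 1 1) = 1 := Matrix.one_apply_eq 1
        have : (0 : ℝ) = 1 := by
          rw [← h11, ← hBinv, Matrix.mul_apply]
          rw [Finset.sum_eq_zero (fun k _ => by rw [hzero k, mul_zero])]
        exact zero_ne_one this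

lemma isNMatrix_to_negMinors {n : ℕ} {A : Matrix (Fin n) (Fin n) ℝ} (h : IsNMatrix A) :
    NegMinors A := by
  intro m f hm hf
  classical
  set s : Finset (Fin n) := univ.image f with hs
  have hmem : ∀ i, f i ∈ s := fun i => Finset.mem_image.2 ⟨i, Finset.mem_univ i, rfl⟩
  have hcard : Fintype.card (Fin m) = Fintype.card s := by
    rw [Fintype.card_fin, Fintype.card_coe, hs, Finset.card_image_of_injective _ hf,
      Finset.card_univ, Fintype.card_fin]
  have hinj : Function.Injective (fun i : Fin m => (⟨f i, hmem i⟩ : s)) := by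
    intro a b hab
    exact hf (congrArg Subtype.val hab)
  set e : Fin m ≃ s := Equiv.ofBijective _
    ((Fintype.bijective_iff_injective_and_card _).2 ⟨hinj, hcard⟩) with he
  have hsub : A.submatrix f f
      = (A.submatrix (fun i : s => (i : Fin n)) (fun j : s => (j : Fin n))).submatrix e e := by
    ext i j
    rfl
  rw [hsub, Matrix.det_submatrix_equiv_self]
  apply h s
  obtain ⟨i⟩ := Fin.pos_iff_nonempty.1 (Nat.pos_of_ne_zero hm)
  exact ⟨f i, hmem i⟩

lemma negMinors_to_isNMatrix {n : ℕ} {A : Matrix (Fin n) (Fin n) ℝ} (h : NegMinors A) :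
    IsNMatrix A := by
  intro s hs
  set e : s ≃ Fin s.card := s.equivFin with he
  set f : Fin s.card → Fin n := fun i => ((e.symm i : s) : Fin n) with hfdef
  have hf : Function.Injective f := by
    intro a b hab
    exact e.symm.injective (Subtype.coe_injective hab)
  have hsub : A.submatrix (fun i : s => (i : Fin n)) (fun j : s => (j : Fin n))
      = (A.submatrix f f).submatrix e e := by
    ext i j
    simp [hfdef]
  rw [hsub, Matrix.det_submatrix_equiv_self]
  exact h s.card f (Finset.card_pos.2 hs).ne' hf

lemma negMinors_diag {n : ℕ} {A : Matrix (Fin n) (Fin n) ℝ} (h : NegMinors A) (i : Fin n) :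
    A i i < 0 := by
  have := h 1 (fun _ => i) one_ne_zero (Function.injective_of_subsingleton _)
  rwa [Matrix.det_fin_one, Matrix.submatrix_apply] at this

lemma negMinors_entries {n : ℕ} {A : Matrix (Fin n) (Fin n) ℝ} (h : NegMinors A)
    (hnp : ∀ i j, A i j ≤ 0) (i j : Fin n) : A i j < 0 := by
  rcases eq_or_ne i j with rfl | hij
  · exact negMinors_diag h i
  · have hinj : Function.Injective ![i, j] := by
      intro x y hxy
      fin_cases x <;> fin_cases y <;> simp_all
    have hdet := h 2 ![i, j] (by norm_num) hinj
    rw [Matrix.det_fin_two] at hdet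
    simp only [Matrix.submatrix_apply, Matrix.cons_val_zero, Matrix.cons_val_one,
      Matrix.head_cons] at hdet
    have hii := negMinors_diag h i
    have hjj := negMinors_diag h j
    rcases lt_or_eq_of_le (hnp i j) with hlt | heq
    · exact hlt
    · rw [heq, zero_mul, sub_zero] at hdet
      exact absurd hdet (not_lt.2 (mul_pos (neg_pos.2 hii) (neg_pos.2 hjj) |>.le.trans (by nlinarith)))

theorem stmt4 {n : ℕ} (A : Matrix (Fin n) (Fin n) ℝ) :
    IsNMatrixSecond A ↔
      ((∀ i j, A i j < 0) ∧
        ∀ x : Fin n → ℝ, (∀ i, x i * A.mulVec x i ≤ 0) →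
          (∀ i, x i ≤ 0) ∨ (∀ i, 0 ≤ x i)) := by
  constructor
  · rintro ⟨hN, hnp⟩
    have hNM : NegMinors A := isNMatrix_to_negMinors hN
    have hent : ∀ i j, A i j < 0 := negMinors_entries hNM hnp
    exact ⟨hent, fun x hx => forward_main n A hNM hent x hx⟩
  · rintro ⟨hent, hprop⟩
    exact ⟨negMinors_to_isNMatrix (fun m f hm hf => converse_main m n A hent hprop f hm hf),
      fun i j => (hent i j).le⟩
end

section
/- Let A ∈ ℝ^{n×n} be an N-matrix of the first category (an N-matrix having at least one positive entry). Then there is a nonempty proper subset J of {1,…,n} such that, after partitioning A into blocks A_{JJ}, A_{JJ^c}, A_{J^cJ}, A_{J^cJ^c}, one has A_{JJ} < 0, A_{J^cJ^c} < 0, A_{JJ^c} > 0, and A_{J^cJ} > 0 entrywise. -/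
open Matrix Finset

lemma det_submatrix_inj {n m : ℕ} (A : Matrix (Fin n) (Fin n) ℝ) (hN : IsNMatrix A)
    (f : Fin (m+1) → Fin n) (hf : Function.Injective f) :
    (A.submatrix f f).det < 0 := by
  classical
  set s : Finset (Fin n) := Finset.image f Finset.univ with hs
  have hmem : ∀ a, f a ∈ s := fun a => Finset.mem_image_of_mem f (Finset.mem_univ a)
  have hne : s.Nonempty := ⟨f 0, hmem 0⟩
  have hNs := hN s hne
  let e : Fin (m+1) ≃ s :=
    Equiv.ofBijective (fun a => (⟨f a, hmem a⟩ : s))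
      ⟨fun a b h => hf (by simpa using congrArg Subtype.val h),
       fun ⟨x, hx⟩ => by
         obtain ⟨a, -, ha⟩ := Finset.mem_image.mp hx
         exact ⟨a, by simp [ha]⟩⟩
  have key : (A.submatrix (fun i : s => (i : Fin n)) (fun j : s => (j : Fin n))).submatrix e e
      = A.submatrix f f := rfl
  have := Matrix.det_submatrix_equiv_self e
    (A.submatrix (fun i : s => (i : Fin n)) (fun j : s => (j : Fin n)))
  rw [key] at this
  rw [this]
  exact hNs

lemma diag_neg {n : ℕ} (A : Matrix (Fin n) (Fin n) ℝ) (hN : IsNMatrix A) (i : Fin n) :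
    A i i < 0 := by
  have h := det_submatrix_inj A hN ![i] (fun a b _ => Subsingleton.elim (α := Fin 1) a b)
  rw [Matrix.det_fin_one] at h
  simpa using h

lemma pair_neg {n : ℕ} (A : Matrix (Fin n) (Fin n) ℝ) (hN : IsNMatrix A) {i j : Fin n}
    (hij : i ≠ j) : A i i * A j j - A i j * A j i < 0 := by
  have hf : Function.Injective ![i, j] := by
    intro a b h
    fin_cases a <;> fin_cases b <;> simp_all
  have h := det_submatrix_inj A hN ![i, j] hf
  rw [Matrix.det_fin_two] at h
  simpa using h

lemma triple_neg {n : ℕ} (A : Matrix (Fin n) (Fin n) ℝ) (hN : IsNMatrix A) {a i j : Fin n}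
    (hai : a ≠ i) (haj : a ≠ j) (hij : i ≠ j) :
    A a i * A a j * A i j < 0 := by
  have hf : Function.Injective ![a, i, j] := by
    intro x y h
    fin_cases x <;> fin_cases y <;> simp_all
  have hdet := det_submatrix_inj A hN ![a, i, j] hf
  rw [Matrix.det_fin_three] at hdet
  simp only [Matrix.submatrix_apply, Matrix.cons_val_zero, Matrix.cons_val_one,
    Matrix.head_cons, Matrix.cons_val_two, Matrix.tail_cons, Matrix.head_fin_const] at hdet
  set d1 := A a a; set d2 := A i i; set d3 := A j j
  set u := A a i; set u' := A i a
  set v := A a j; set v' := A j a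
  set w := A i j; set w' := A j i
  have hd1 : d1 < 0 := diag_neg A hN a
  have hd2 : d2 < 0 := diag_neg A hN i
  have hd3 : d3 < 0 := diag_neg A hN j
  have h12 : d1 * d2 - u * u' < 0 := pair_neg A hN hai
  have h13 : d1 * d3 - v * v' < 0 := pair_neg A hN haj
  have h23 : d2 * d3 - w * w' < 0 := pair_neg A hN hij
  have huu' : 0 < u * u' := by nlinarith
  have hvv' : 0 < v * v' := by nlinarith
  have hww' : 0 < w * w' := by nlinarith
  by_contra hcon
  push_neg at hcon
  have hu : u ≠ 0 := fun h => by simp [h] at huu'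
  have hv : v ≠ 0 := fun h => by simp [h] at hvv'
  have hw : w ≠ 0 := fun h => by simp [h] at hww'
  have huvw : 0 < u * v * w :=
    lt_of_le_of_ne hcon (by exact fun h => (mul_ne_zero (mul_ne_zero hu hv) hw) h.symm)
  -- 0 < u * w * v'
  have h1 : 0 < u * w * v' := by
    have hp : 0 < (u * w * v') * (u * v * w) := by nlinarith [sq_nonneg (u*w), mul_pos hvv' (mul_pos (mul_pos (mul_self_pos.mpr hu) (mul_self_pos.mpr hw)) one_pos)]
    rcases mul_pos_iff.mp hp with ⟨h, _⟩ | ⟨_, h⟩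
    · exact h
    · linarith
  have h2 : 0 < v * u' * w' := by
    have hp : 0 < (v * u' * w') * (u * v * w) := by nlinarith [mul_pos huu' hww', sq_nonneg v, mul_self_pos.mpr hv]
    rcases mul_pos_iff.mp hp with ⟨h, _⟩ | ⟨_, h⟩
    · exact h
    · linarith
  have t1 : 0 < (-d1) * (w * w' - d2 * d3) := mul_pos (by linarith) (by linarith)
  have t2 : 0 < (-d3) * (u * u') := mul_pos (by linarith) huu'
  have t3 : 0 < (-d2) * (v * v') := mul_pos (by linarith) hvv'
  nlinarith [t1, t2, t3, h1, h2]

theorem stmt5 {n : ℕ} (A : Matrix (Fin n) (Fin n) ℝ)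
    (hN : IsNMatrix A) (hpos : ∃ i j, 0 < A i j) :
    ∃ J : Finset (Fin n), J.Nonempty ∧ J ≠ Finset.univ ∧ BlockPattern A J := by
  classical
  obtain ⟨a, b, hab⟩ := hpos
  have hdiag : ∀ i, A i i < 0 := diag_neg A hN
  have hne_ab : a ≠ b := by
    intro h; rw [h] at hab; exact absurd hab (not_lt.mpr (le_of_lt (hdiag b)))
  have hsym : ∀ i j : Fin n, i ≠ j → 0 < A i j * A j i := by
    intro i j hij
    have := pair_neg A hN hij
    nlinarith [hdiag i, hdiag j]
  have hne0 : ∀ i j : Fin n, i ≠ j → A i j ≠ 0 := by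
    intro i j hij h
    have := hsym i j hij
    simp [h] at this
  have hsymsign : ∀ i j : Fin n, i ≠ j → 0 < A i j → 0 < A j i := by
    intro i j hij h
    have hp := hsym i j hij
    rcases mul_pos_iff.mp hp with ⟨_, h2⟩ | ⟨h1, _⟩
    · exact h2
    · linarith
  have hsymsign' : ∀ i j : Fin n, i ≠ j → A i j < 0 → A j i < 0 := by
    intro i j hij h
    have hp := hsym i j hij
    rcases mul_pos_iff.mp hp with ⟨h1, _⟩ | ⟨_, h2⟩
    · linarith
    · exact h2
  set J : Finset (Fin n) := insert a (Finset.univ.filter (fun j => A a j < 0)) with hJ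
  have hmemJ : ∀ j, j ∈ J ↔ (j = a ∨ A a j < 0) := by
    intro j; simp [hJ]
  have hinJ : ∀ j, j ≠ a → j ∈ J → A a j < 0 := by
    intro j hja hj
    exact ((hmemJ j).mp hj).resolve_left hja
  have hnotJ : ∀ j, j ∉ J → j ≠ a ∧ 0 < A a j := by
    intro j hj
    rw [hmemJ] at hj
    push_neg at hj
    refine ⟨hj.1, ?_⟩
    rcases lt_trichotomy (A a j) 0 with h | h | h
    · exact absurd h (not_lt.mpr hj.2)
    · exact absurd h (hne0 a j (fun he => hj.1 he.symm))
    · exact h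
  refine ⟨J, ⟨a, by simp [hJ]⟩, ?_, ?_, ?_, ?_, ?_⟩
  · -- J ≠ univ : b ∉ J
    intro h
    have hb : b ∈ J := h ▸ Finset.mem_univ b
    rw [hmemJ] at hb
    rcases hb with h' | h'
    · exact hne_ab h'.symm
    · linarith
  · -- i ∈ J, j ∈ J → A i j < 0
    intro i hi j hj
    by_cases hij : i = j
    · rw [hij]; exact hdiag j
    by_cases hia : i = a
    · have hja : j ≠ a := fun h => hij (by rw [hia, h])
      rw [hia]
      exact hinJ j hja hj
    · have h1 : A a i < 0 := hinJ i hia hi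
      by_cases hja : j = a
      · rw [hja]
        exact hsymsign' a i (fun h => hia h.symm) h1
      · have h2 : A a j < 0 := hinJ j hja hj
        have ht := triple_neg A hN (fun h => hia h.symm) (fun h => hja h.symm) hij
        nlinarith [mul_pos_of_neg_of_neg h1 h2]
  · -- i ∉ J, j ∉ J → A i j < 0
    intro i hi j hj
    obtain ⟨hia, h1⟩ := hnotJ i hi
    obtain ⟨hja, h2⟩ := hnotJ j hj
    by_cases hij : i = j
    · rw [hij]; exact hdiag j
    have ht := triple_neg A hN (Ne.symm hia) (Ne.symm hja) hij
    nlinarith [mul_pos h1 h2]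
  · -- i ∈ J, j ∉ J → 0 < A i j
    intro i hi j hj
    obtain ⟨hja, h2⟩ := hnotJ j hj
    by_cases hia : i = a
    · rw [hia]; exact h2
    · have h1 : A a i < 0 := hinJ i hia hi
      have hij : i ≠ j := fun h => by rw [h] at h1; linarith
      have ht := triple_neg A hN (fun h => hia h.symm) (Ne.symm hja) hij
      nlinarith [mul_neg_of_neg_of_pos h1 h2]
  · -- i ∉ J, j ∈ J → 0 < A i j
    intro i hi j hj
    obtain ⟨hia, h1⟩ := hnotJ i hi
    by_cases hja : j = a
    · rw [hja]
      exact hsymsign a i (Ne.symm hia) h1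
    · have h2 : A a j < 0 := hinJ j hja hj
      have hij : i ≠ j := fun h => by rw [h] at h1; linarith
      have ht := triple_neg A hN (Ne.symm hia) (fun h => hja h.symm) hij
      nlinarith [mul_neg_of_pos_of_neg h1 h2]
end

section
/- Let J be a nonempty proper subset of {1,…,n} and let A ∈ ℝ^{n×n} satisfy A_{JJ} < 0, A_{J^cJ^c} < 0, A_{JJ^c} > 0, A_{J^cJ} > 0 entrywise. Then A is an N-matrix if and only if: whenever x ∈ ℝ^n satisfies x_i (Ax)_i ≤ 0 for all i, either (x_J ≤ 0 and x_{J^c} ≥ 0) or (x_J ≥ 0 and x_{J^c} ≤ 0). -/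
open Matrix Finset

set_option linter.unusedSectionVars false

namespace NMat
variable {m : Type*} [Fintype m] [DecidableEq m]

noncomputable def pm (A : Matrix m m ℝ) (s : Finset m) : ℝ :=
  (A.submatrix (fun i : s => (i : m)) (fun j : s => (j : m))).det

theorem pm_univ (A : Matrix m m ℝ) : pm A Finset.univ = A.det := by
  unfold pm
  rw [← Matrix.det_submatrix_equiv_self (Equiv.subtypeUnivEquiv (fun x => Finset.mem_univ x)) A]
  congr!

theorem pm_congr {A B : Matrix m m ℝ} {s : Finset m}
    (h : ∀ i ∈ s, ∀ j ∈ s, A i j = B i j) : pm A s = pm B s := by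
  unfold pm; congr 1; ext i j; exact h i i.2 j j.2

theorem pm_submatrix {α : Type*} [Fintype α] [DecidableEq α] (A : Matrix m m ℝ)
    (g : α → m) (hg : Function.Injective g) (s : Finset α) :
    pm (A.submatrix g g) s = pm A (s.map ⟨g, hg⟩) := by
  have hbij : Function.Bijective (fun i : s => (⟨g i, Finset.mem_map_of_mem _ i.2⟩ :
      (s.map ⟨g, hg⟩ : Finset m))) := by
    constructor
    · intro a b hab
      apply Subtype.ext; apply hg
      simpa [Subtype.ext_iff] using hab
    · rintro ⟨y, hy⟩
      rw [Finset.mem_map] at hy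
      obtain ⟨i, hi, rfl⟩ := hy
      exact ⟨⟨i, hi⟩, rfl⟩
  let e := Equiv.ofBijective _ hbij
  unfold pm
  rw [← Matrix.det_submatrix_equiv_self e]
  rfl

theorem pm_singleton (A : Matrix m m ℝ) (a : m) : pm A {a} = A a a := by
  haveI : Unique (({a} : Finset m) : Type _) :=
    ⟨⟨⟨a, Finset.mem_singleton_self a⟩⟩, fun b => Subtype.ext (Finset.mem_singleton.mp b.2)⟩
  unfold pm
  rw [Matrix.det_unique]
  simp only [Matrix.submatrix_apply]
  rw [show ((default : ({a} : Finset m)) : m) = a from Finset.mem_singleton.mp (Subtype.mem _)]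

theorem det_of_rows_single (M : Matrix m m ℝ) (s : Finset m) (d : m → ℝ)
    (h : ∀ i ∈ s, ∀ j, M i j = if i = j then d i else 0) :
    M.det = (∏ i ∈ s, d i) * pm M sᶜ := by
  classical
  let e₂ : (s : Type _) ≃ {a : m // ¬ a ∈ sᶜ} := Equiv.subtypeEquivRight (by intro x; simp)
  let E : (sᶜ : Finset m) ⊕ (s : Finset m) ≃ m :=
    (Equiv.sumCongr (Equiv.refl _) e₂).trans (Equiv.sumCompl (· ∈ sᶜ))
  have hM : M.submatrix E E = Matrix.fromBlocks
      (M.submatrix (fun i : (sᶜ : Finset m) => (i : m)) (fun j : (sᶜ : Finset m) => (j : m)))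
      (M.submatrix (fun i : (sᶜ : Finset m) => (i : m)) (fun j : s => (j : m)))
      0 (Matrix.diagonal fun i : s => d i) := by
    ext i j
    rcases i with i | i <;> rcases j with j | j
    · simp [E, e₂, Matrix.submatrix_apply]
    · simp [E, e₂, Matrix.submatrix_apply]
    · have hij : (i : m) ≠ (j : m) := by
        intro hh
        have := j.2
        rw [Finset.mem_compl] at this
        exact this (hh ▸ i.2)
      simp [E, e₂, Matrix.submatrix_apply, h i i.2, hij]
    · have : (i : m) = (j : m) ↔ i = j := Subtype.coe_inj
      simp [E, e₂, Matrix.submatrix_apply, h i i.2, Matrix.diagonal]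
  have hdet := Matrix.det_submatrix_equiv_self E M
  rw [hM] at hdet
  rw [← hdet, Matrix.det_fromBlocks_zero₂₁, Matrix.det_diagonal]
  unfold pm
  rw [← Finset.prod_coe_sort s d]
  ring

theorem det_updateColumn_single (N : Matrix m m ℝ) (k : m) :
    (N.updateCol k (Pi.single k 1)).det = pm N (Finset.univ.erase k) := by
  classical
  rw [← Matrix.det_transpose, ← Matrix.updateRow_transpose]
  have hbt := det_of_rows_single (N.transpose.updateRow k (Pi.single k 1)) {k}
    (fun _ => (1:ℝ)) ?_
  · rw [hbt, Finset.prod_singleton, one_mul, Finset.compl_singleton]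
    have : pm (N.transpose.updateRow k (Pi.single k 1)) (Finset.univ.erase k)
        = pm N.transpose (Finset.univ.erase k) := by
      apply pm_congr
      intro i hi j hj
      rw [Matrix.updateRow_ne]
      exact (Finset.mem_erase.mp hi).1
    rw [this]
    unfold pm
    rw [← Matrix.det_transpose]
    congr 1
  · intro i hi j
    rw [Finset.mem_singleton] at hi
    subst hi
    rw [Matrix.updateRow_self, Pi.single_apply]
    by_cases hj : i = j
    · subst hj; simp
    · rw [if_neg (Ne.symm hj), if_neg hj]

theorem det_add_diagonal (N : Matrix m m ℝ) (d : m → ℝ) :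
    (N + Matrix.diagonal d).det = ∑ s : Finset m, (∏ i ∈ s, d i) * pm N sᶜ := by
  classical
  have h1 : (N + Matrix.diagonal d) = (Matrix.diagonal d + N) := by rw [add_comm]
  rw [h1]
  have h2 : (Matrix.diagonal d + N).det
      = ((Matrix.detRowAlternating : (m → ℝ) [⋀^m]→ₗ[ℝ] ℝ) : MultilinearMap ℝ (fun _ : m => (m → ℝ)) ℝ)
          ((fun i => Matrix.diagonal d i) + (fun i => N i)) := rfl
  rw [h2, MultilinearMap.map_add_univ]
  apply Finset.sum_congr rfl
  intro s _
  have h3 : ((Matrix.detRowAlternating : (m → ℝ) [⋀^m]→ₗ[ℝ] ℝ) : MultilinearMap ℝ (fun _ : m => (m → ℝ)) ℝ)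
      (s.piecewise (fun i => Matrix.diagonal d i) (fun i => N i)) = Matrix.det (Matrix.of (s.piecewise (Matrix.diagonal d) N)) := rfl
  rw [h3]
  rw [det_of_rows_single (Matrix.of (s.piecewise (Matrix.diagonal d) N)) s d ?_]
  · congr 1
    apply pm_congr
    intro i hi j _
    have hnotmem := Finset.piecewise_eq_of_notMem s (Matrix.diagonal d) N (Finset.mem_compl.mp hi)
    rw [Matrix.of_apply, hnotmem]
  · intro i hi j
    have hmem := Finset.piecewise_eq_of_mem s (Matrix.diagonal d) N hi
    rw [Matrix.of_apply, hmem]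
    rfl

theorem det_schur_one (M : Matrix m m ℝ) (k : m) (h : M k k ≠ 0) :
    M.det = M k k * (Matrix.of fun i j : {a : m // a ≠ k} =>
      M i j - M i k * M k j / M k k).det := by
  classical
  set L : Matrix m m ℝ := Matrix.of fun i j =>
    if i = j then (1:ℝ) else if j = k then M i k / M k k else 0 with hLdef
  set A' : Matrix m m ℝ := Matrix.of fun i j =>
    if i = k then M k j else M i j - M i k / M k k * M k j with hA'def
  have hfact : M = L * A' := by
    ext i j
    rw [Matrix.mul_apply]
    by_cases hik : i = k
    · subst hik
      rw [Finset.sum_eq_single i]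
      · simp [L, A']
      · intro b _ hb
        have h1 : L i b = 0 := by
          simp only [L, Matrix.of_apply]
          rw [if_neg (Ne.symm hb), if_neg hb]
        rw [h1, zero_mul]
      · intro hh; exact absurd (Finset.mem_univ i) hh
    · have hsum : ∀ b ∈ Finset.univ.erase i, b ≠ k → L i b * A' b j = 0 := by
        intro b hb hbk
        have h1 : L i b = 0 := by
          simp only [L, Matrix.of_apply]
          rw [if_neg (fun hh => (Finset.mem_erase.mp hb).1 hh.symm), if_neg hbk]
        rw [h1, zero_mul]
      rw [← Finset.add_sum_erase _ _ (Finset.mem_univ i)]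
      have hk_mem : k ∈ Finset.univ.erase i := Finset.mem_erase.mpr ⟨Ne.symm hik, Finset.mem_univ k⟩
      rw [← Finset.add_sum_erase _ _ hk_mem]
      have hrest : ∑ b ∈ (Finset.univ.erase i).erase k, L i b * A' b j = 0 := by
        apply Finset.sum_eq_zero
        intro b hb
        exact hsum b (Finset.mem_of_mem_erase hb) (Finset.mem_erase.mp hb).1
      rw [hrest, add_zero]
      simp only [L, A', Matrix.of_apply, if_pos rfl, if_neg hik, if_neg (Ne.symm hik)]
      simp only [if_true, eq_self_iff_true, ite_true]
      field_simp
      ring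
  have hdetL : L.det = 1 := by
    rw [← Matrix.det_transpose]
    rw [det_of_rows_single L.transpose (Finset.univ.erase k) (fun _ => (1:ℝ)) ?_]
    · rw [Finset.prod_const_one, one_mul]
      have hcompl : (Finset.univ.erase k)ᶜ = ({k} : Finset m) := by
        rw [← Finset.compl_singleton, compl_compl]
      rw [hcompl, pm_singleton]
      simp [L]
    · intro i hi j
      have hik : i ≠ k := (Finset.mem_erase.mp hi).1
      simp only [Matrix.transpose_apply, L, Matrix.of_apply]
      by_cases hij : i = j
      · subst hij; rw [if_pos rfl, if_pos rfl]
      · rw [if_neg (fun hh => hij hh.symm), if_neg hik, if_neg hij]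
  have hdetA' : A'.det = M k k * pm A' ({k} : Finset m)ᶜ := by
    rw [← Matrix.det_transpose]
    rw [det_of_rows_single A'.transpose ({k} : Finset m) (fun _ => M k k) ?_]
    · rw [Finset.prod_singleton]
      congr 1
      unfold pm
      rw [← Matrix.det_transpose]
      congr 1
    · intro i hi j
      rw [Finset.mem_singleton] at hi
      subst hi
      simp only [Matrix.transpose_apply, A', Matrix.of_apply]
      by_cases hj : j = i
      · subst hj; rw [if_pos rfl, if_pos rfl]
      · rw [if_neg hj, if_neg (fun hh : (i:m) = j => hj hh.symm)]
        field_simp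
        ring
  have hpmA' : pm A' ({k} : Finset m)ᶜ = (Matrix.of fun i j : {a : m // a ≠ k} =>
      M i j - M i k * M k j / M k k).det := by
    let e : {a : m // a ≠ k} ≃ (({k} : Finset m)ᶜ : Finset m) :=
      Equiv.subtypeEquivRight (by intro x; simp)
    unfold pm
    rw [← Matrix.det_submatrix_equiv_self e]
    congr 1
    ext ⟨i, hik⟩ ⟨j, hjk⟩
    simp only [Matrix.submatrix_apply, Matrix.of_apply, A', e, Equiv.subtypeEquivRight_apply]
    rw [if_neg hik]
    ring
  have hfin : M.det = L.det * A'.det := by rw [← Matrix.det_mul, ← hfact]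
  rw [hfin, hdetL, one_mul, hdetA', hpmA']

theorem schur_pprop (M : Matrix m m ℝ) (hN : ∀ s : Finset m, s.Nonempty → pm M s < 0)
    (k : m) (hkk : M k k < 0) (s : Finset {a : m // a ≠ k}) :
    0 < pm (Matrix.of fun i j : {a : m // a ≠ k} => M i j - M i k * M k j / M k k) s := by
  classical
  set g : (s : Type _) ⊕ Unit → m := Sum.elim (fun i => ((i : {a : m // a ≠ k}) : m)) (fun _ => k)
    with hg_def
  have hg : Function.Injective g := by
    rintro (a | a) (b | b) hab
    · simp only [g, Sum.elim_inl] at hab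
      exact congrArg Sum.inl (Subtype.ext (Subtype.ext hab))
    · exact absurd hab (a : {a : m // a ≠ k}).2
    · exact absurd hab.symm (b : {a : m // a ≠ k}).2
    · cases a; cases b; rfl
  set M' : Matrix ((s : Type _) ⊕ Unit) ((s : Type _) ⊕ Unit) ℝ := M.submatrix g g with hM'
  have hM'kk : M' (Sum.inr ()) (Sum.inr ()) = M k k := rfl
  have hschur := det_schur_one M' (Sum.inr ()) (by rw [hM'kk]; exact ne_of_lt hkk)
  -- identify the schur complement with the submatrix of the schur complement of M
  let e : (s : Type _) ≃ {a : (s : Type _) ⊕ Unit // a ≠ Sum.inr ()} :=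
    { toFun := fun i => ⟨Sum.inl i, by simp⟩
      invFun := fun a => match a with
        | ⟨Sum.inl i, _⟩ => i
        | ⟨Sum.inr u, hu⟩ => absurd (by cases u; rfl) hu
      left_inv := fun i => rfl
      right_inv := fun a => by
        rcases a with ⟨i | u, hu⟩
        · rfl
        · exact absurd (by cases u; rfl) hu }
  have hiden : ((Matrix.of fun i j : {a : m // a ≠ k} => M i j - M i k * M k j / M k k).submatrix
        (fun i : s => (i : {a : m // a ≠ k})) (fun j : s => (j : {a : m // a ≠ k})))
      = (Matrix.of fun i j : {a : (s : Type _) ⊕ Unit // a ≠ Sum.inr ()} =>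
          M' i j - M' i (Sum.inr ()) * M' (Sum.inr ()) j / M' (Sum.inr ()) (Sum.inr ())).submatrix
        e e := by
    ext i j
    rfl
  have hdet_eq : pm (Matrix.of fun i j : {a : m // a ≠ k} => M i j - M i k * M k j / M k k) s
      = (Matrix.of fun i j : {a : (s : Type _) ⊕ Unit // a ≠ Sum.inr ()} =>
          M' i j - M' i (Sum.inr ()) * M' (Sum.inr ()) j / M' (Sum.inr ()) (Sum.inr ())).det := by
    unfold pm
    rw [hiden, Matrix.det_submatrix_equiv_self]
  have hdetM' : M'.det < 0 := by
    have h1 : pm M' Finset.univ = pm M (Finset.univ.map ⟨g, hg⟩) := by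
      rw [hM', pm_submatrix]
    have h2 : (Finset.univ.map ⟨g, hg⟩).Nonempty := by
      refine ⟨k, ?_⟩
      rw [Finset.mem_map]
      exact ⟨Sum.inr (), Finset.mem_univ _, rfl⟩
    have := hN _ h2
    rw [← h1, pm_univ] at this
    exact this
  rw [hdet_eq]
  rw [hschur] at hdetM'
  nlinarith [hdetM', (show M' (Sum.inr ()) (Sum.inr ()) < 0 from hkk)]

theorem sum_subtype_support {p : m → Prop} [DecidablePred p] (f : m → ℝ)
    (h : ∀ i, ¬ p i → f i = 0) : (∑ i : {i // p i}, f i) = ∑ i, f i := by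
  rw [← Finset.sum_subtype (Finset.univ.filter p) (by intro x; simp) f]
  apply Finset.sum_filter_of_ne
  intro x _ hfx
  by_contra hpx
  exact hfx (h x hpx)

theorem no_sign_reversal_of_P (M : Matrix m m ℝ)
    (hP : ∀ s : Finset m, 0 < pm M s) (x : m → ℝ) (hx : x ≠ 0)
    (hrev : ∀ i, x i * M.mulVec x i ≤ 0) : False := by
  classical
  obtain ⟨i₀, hi₀⟩ : ∃ i, x i ≠ 0 := Function.ne_iff.mp hx
  set p : m → Prop := fun i => x i ≠ 0 with hp
  set N : Matrix {i // p i} {i // p i} ℝ := M.submatrix Subtype.val Subtype.val with hNdef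
  set z : {i // p i} → ℝ := fun i => x i with hzdef
  have hNz : ∀ i : {i // p i}, N.mulVec z i = M.mulVec x (i : m) := by
    intro i
    show ∑ j : {i // p i}, N i j * z j = ∑ j, M i j * x j
    exact sum_subtype_support (fun j => M i j * x j)
      (fun j hj => by show M (i : m) j * x j = 0; rw [not_not.mp hj, mul_zero])
  have hPN : ∀ s : Finset {i // p i}, 0 < pm N s := by
    intro s
    rw [hNdef, pm_submatrix M Subtype.val Subtype.val_injective s]
    exact hP _
  set d : {i // p i} → ℝ := fun i => -(N.mulVec z i * z i) / (z i ^ 2) with hddef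
  have hd : ∀ i, 0 ≤ d i := by
    intro i
    apply div_nonneg _ (sq_nonneg _)
    rw [neg_nonneg, mul_comm]
    rw [hzdef]
    simp only
    rw [hNz i]
    exact hrev (i : m)
  have hker : (N + Matrix.diagonal d).mulVec z = 0 := by
    funext i
    rw [Matrix.add_mulVec, Pi.add_apply, Matrix.mulVec_diagonal]
    have hzi : z i ≠ 0 := i.2
    rw [hddef]
    simp only
    field_simp
    ring
    rfl
  have hz0 : z ≠ 0 := by
    intro hcon
    exact hi₀ (by simpa [hzdef] using congrFun hcon ⟨i₀, hi₀⟩)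
  have hdet0 : (N + Matrix.diagonal d).det = 0 :=
    Matrix.exists_mulVec_eq_zero_iff.mp ⟨z, hz0, hker⟩
  rw [det_add_diagonal] at hdet0
  have hpos : 0 < ∑ s : Finset {i // p i}, (∏ i ∈ s, d i) * pm N sᶜ := by
    apply Finset.sum_pos'
    · intro s _
      exact mul_nonneg (Finset.prod_nonneg (fun i _ => hd i)) (le_of_lt (hPN _))
    · refine ⟨∅, Finset.mem_univ _, ?_⟩
      rw [Finset.prod_empty, one_mul, Finset.compl_empty]
      exact hPN _
  rw [hdet0] at hpos
  exact lt_irrefl 0 hpos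

theorem neg_mulVec_neg {μ : Type*} [Fintype μ] [DecidableEq μ] (N : Matrix μ μ ℝ)
    (hneg : ∀ i j, N i j < 0) (v : μ → ℝ) (hv : ∀ i, 0 ≤ v i) (j₀ : μ) (hj₀ : 0 < v j₀) :
    ∀ i, N.mulVec v i < 0 := by
  intro i
  show (∑ j, N i j * v j) < 0
  rw [← Finset.add_sum_erase _ _ (Finset.mem_univ j₀)]
  apply add_neg_of_neg_of_nonpos
  · exact mul_neg_of_neg_of_pos (hneg i j₀) hj₀
  · exact Finset.sum_nonpos (fun j _ => mul_nonpos_of_nonpos_of_nonneg (le_of_lt (hneg i j)) (hv j))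

theorem sum_finset_support (s : Finset m) (f : m → ℝ)
    (h : ∀ i ∉ s, f i = 0) : (∑ i : s, f (i : m)) = ∑ i, f i := by
  rw [Finset.sum_coe_sort s f]
  exact Finset.sum_subset (Finset.subset_univ s) (fun x _ hx => h x hx)

theorem core_backward (M : Matrix m m ℝ) (hneg : ∀ i j, M i j < 0)
    (hSR : ∀ x : m → ℝ, (∀ i, x i * M.mulVec x i ≤ 0) → (∀ i, x i ≤ 0) ∨ (∀ i, 0 ≤ x i)) :
    ∀ s : Finset m, s.Nonempty → pm M s < 0 := by
  classical
  intro s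
  induction s using Finset.strongInduction with
  | _ s IH =>
  intro hs
  set N : Matrix (s : Type _) (s : Type _) ℝ :=
    M.submatrix (fun i : s => (i : m)) (fun j : s => (j : m)) with hNdef
  have hpmN : pm M s = N.det := rfl
  haveI hne : Nonempty (s : Type _) := hs.to_subtype
  have hNneg : ∀ i j : (s : Type _), N i j < 0 := fun i j => hneg _ _
  have hval_inj : Function.Injective (fun i : s => (i : m)) := Subtype.val_injective
  have hminor : ∀ k : (s : Type _), (Finset.univ.erase k).Nonempty →
      pm N (Finset.univ.erase k) < 0 := by
    intro k hke
    rw [hNdef, pm_submatrix M _ hval_inj]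
    apply IH
    · constructor
      · intro y hy
        rw [Finset.mem_map] at hy
        obtain ⟨i, _, rfl⟩ := hy
        exact i.2
      · intro hsub
        have hk := hsub k.2
        rw [Finset.mem_map] at hk
        obtain ⟨i, hi, hik⟩ := hk
        have : i = k := Subtype.ext hik
        subst this
        exact (Finset.mem_erase.mp hi).1 rfl
    · exact hke.map
  have hSRN : ∀ z : ↥s → ℝ, (∀ i, z i * N.mulVec z i ≤ 0) →
      (∀ i, z i ≤ 0) ∨ (∀ i, 0 ≤ z i) := by
    intro z hz
    set x : m → ℝ := fun i => if h : i ∈ s then z ⟨i, h⟩ else 0 with hxdef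
    have hxz : ∀ i : (s : Type _), x (i : m) = z i := fun i => dif_pos i.2
    have hMx : ∀ i : (s : Type _), M.mulVec x (i : m) = N.mulVec z i := by
      intro i
      show (∑ j, M (i : m) j * x j) = ∑ j : (s : Type _), N i j * z j
      rw [← sum_finset_support s (fun j => M (i : m) j * x j)
        (fun j hj => by show M (i : m) j * x j = 0; rw [hxdef]; simp only; rw [dif_neg hj, mul_zero])]
      exact Fintype.sum_equiv (Equiv.refl _) _ _ (fun j => by rw [hxz j]; rfl)
    have hrevx : ∀ i, x i * M.mulVec x i ≤ 0 := by
      intro i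
      by_cases h : i ∈ s
      · have := hz ⟨i, h⟩
        rw [← hxz ⟨i, h⟩, ← hMx ⟨i, h⟩] at this
        exact this
      · rw [hxdef]; simp only; rw [dif_neg h, zero_mul]
    rcases hSR x hrevx with h | h
    · exact Or.inl (fun i => by rw [← hxz i]; exact h (i : m))
    · exact Or.inr (fun i => by rw [← hxz i]; exact h (i : m))
  rcases eq_or_lt_of_le (show 1 ≤ s.card from hs.card_pos) with hcard1 | hcard2
  · obtain ⟨a, rfl⟩ := Finset.card_eq_one.mp hcard1.symm
    rw [pm_singleton]
    exact hneg a a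
  · have hcard : 1 < Fintype.card (s : Type _) := by rwa [Fintype.card_coe]
    have hdet_ne : N.det ≠ 0 := by
      intro h0
      obtain ⟨v, hv0, hNv⟩ := Matrix.exists_mulVec_eq_zero_iff.mpr h0
      have hrevv : ∀ i, v i * N.mulVec v i ≤ 0 := fun i => by rw [hNv]; simp
      obtain ⟨j₀, hj₀⟩ := Function.ne_iff.mp hv0
      rcases hSRN v hrevv with hvle | hvge
      · have h1 := neg_mulVec_neg N hNneg (-v) (fun i => by simpa using hvle i) j₀
          (by simpa using lt_of_le_of_ne (hvle j₀) hj₀) j₀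
        rw [Matrix.mulVec_neg, hNv] at h1
        simp at h1
      · have h1 := neg_mulVec_neg N hNneg v hvge j₀
          (lt_of_le_of_ne (hvge j₀) (Ne.symm hj₀)) j₀
        rw [hNv] at h1
        simp at h1
    rw [hpmN]
    rcases lt_trichotomy N.det 0 with h | h | h
    · exact h
    · exact absurd h hdet_ne
    · exfalso
      obtain ⟨k⟩ := hne
      set x : ↥s → ℝ := Matrix.cramer N (Pi.single k 1 : ↥s → ℝ) with hxdef
      have hmv : N.mulVec x = N.det • (Pi.single k 1 : ↥s → ℝ) := Matrix.mulVec_cramer N _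
      have hxk : x k = pm N (Finset.univ.erase k) := by
        rw [hxdef, Matrix.cramer_apply]
        exact det_updateColumn_single N k
      have herase_ne : (Finset.univ.erase k).Nonempty := by
        rw [← Finset.card_pos, Finset.card_erase_of_mem (Finset.mem_univ k)]
        rw [Finset.card_univ]
        omega
      have hxkneg : x k < 0 := by rw [hxk]; exact hminor k herase_ne
      have hmvi : ∀ i : ↥s, N.mulVec x i = N.det * (if i = k then 1 else 0) := by
        intro i
        rw [hmv, Pi.smul_apply, smul_eq_mul, Pi.single_apply]
      have hrevx : ∀ i, x i * N.mulVec x i ≤ 0 := by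
        intro i
        rw [hmvi i]
        by_cases hik : i = k
        · subst hik
          rw [if_pos rfl, mul_one]
          exact le_of_lt (mul_neg_of_neg_of_pos hxkneg h)
        · rw [if_neg hik, mul_zero, mul_zero]
      rcases hSRN x hrevx with hxle | hxge
      · obtain ⟨i, hik⟩ : ∃ i : (s : Type _), i ≠ k := Fintype.exists_ne_of_one_lt_card hcard k
        have h1 : N.mulVec x i = 0 := by
          rw [hmvi i, if_neg hik, mul_zero]
        have h2 : 0 < N.mulVec x i := by
          show 0 < ∑ j, N i j * x j
          rw [← Finset.add_sum_erase _ _ (Finset.mem_univ k)]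
          apply add_pos_of_pos_of_nonneg
          · exact mul_pos_of_neg_of_neg (hNneg i k) hxkneg
          · exact Finset.sum_nonneg (fun j _ => by nlinarith [hNneg i j, hxle j])
        linarith
      · exact absurd (hxge k) (not_le.mpr hxkneg)

theorem core_forward (M : Matrix m m ℝ) (hneg : ∀ i j, M i j < 0)
    (hN : ∀ s : Finset m, s.Nonempty → pm M s < 0)
    (x : m → ℝ) (hrev : ∀ i, x i * M.mulVec x i ≤ 0) :
    (∀ i, x i ≤ 0) ∨ (∀ i, 0 ≤ x i) := by
  classical
  by_contra hcon
  push_neg at hcon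
  obtain ⟨⟨p0, hp0⟩, ⟨q0, hq0⟩⟩ := hcon
  set pr : m → Prop := fun i => x i ≠ 0 with hpr
  set N : Matrix {i // pr i} {i // pr i} ℝ := M.submatrix Subtype.val Subtype.val with hNdef
  set z : {i // pr i} → ℝ := fun i => x i with hzdef
  have hNz : ∀ i : {i // pr i}, N.mulVec z i = M.mulVec x (i : m) := by
    intro i
    show ∑ j : {i // pr i}, N i j * z j = ∑ j, M (i : m) j * x j
    exact sum_subtype_support (fun j => M (i : m) j * x j)
      (fun j hj => by show M (i : m) j * x j = 0; rw [not_not.mp hj, mul_zero])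
  have hNneg : ∀ i j : {i // pr i}, N i j < 0 := fun i j => hneg _ _
  have hNn : ∀ s : Finset {i // pr i}, s.Nonempty → pm N s < 0 := by
    intro s hs
    rw [hNdef, pm_submatrix M Subtype.val Subtype.val_injective]
    exact hN _ hs.map
  have hzrev : ∀ i, z i * N.mulVec z i ≤ 0 := fun i => by rw [hNz i]; exact hrev (i : m)
  have hznz : ∀ i : {i // pr i}, z i ≠ 0 := fun i => i.2
  have hp0' : pr p0 := ne_of_gt hp0
  have hq0' : pr q0 := ne_of_lt hq0
  set pσ : {i // pr i} := ⟨p0, hp0'⟩ with hpσ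
  set qσ : {i // pr i} := ⟨q0, hq0'⟩ with hqσ
  have hzp : 0 < z pσ := hp0
  have hzq : z qσ < 0 := hq0
  set Pos : Finset {i // pr i} := Finset.univ.filter (fun i => 0 < z i) with hPosdef
  set Neg : Finset {i // pr i} := Finset.univ.filter (fun i => z i < 0) with hNegdef
  have hmemPos : ∀ i, i ∈ Pos ↔ 0 < z i := by intro i; simp [hPosdef]
  have hmemNeg : ∀ i, i ∈ Neg ↔ z i < 0 := by intro i; simp [hNegdef]
  have hfilt : Finset.univ.filter (fun j => ¬ 0 < z j) = Neg := by
    rw [hNegdef]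
    apply Finset.filter_congr
    intro j _
    constructor
    · intro h; exact lt_of_le_of_ne (not_lt.mp h) (hznz j)
    · intro h; exact not_lt.mpr (le_of_lt h)
  have hsplit : ∀ (v : {i // pr i} → ℝ) (i),
      N.mulVec v i = (∑ j ∈ Pos, N i j * v j) + (∑ j ∈ Neg, N i j * v j) := by
    intro v i
    show (∑ j, N i j * v j) = _
    rw [← Finset.sum_filter_add_sum_filter_not Finset.univ (fun j => 0 < z j)
      (fun j => N i j * v j), hfilt]
  set P : {i // pr i} → ℝ := fun i => ∑ j ∈ Pos, N i j * z j with hPdef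
  set Q : {i // pr i} → ℝ := fun i => ∑ j ∈ Neg, N i j * z j with hQdef
  have hPosne : Pos.Nonempty := ⟨pσ, (hmemPos pσ).mpr hzp⟩
  have hNegne : Neg.Nonempty := ⟨qσ, (hmemNeg qσ).mpr hzq⟩
  have hPneg : ∀ i, P i < 0 := by
    intro i
    have h1 : (∑ j ∈ Pos, N i j * z j) < ∑ j ∈ Pos, (0:ℝ) :=
      Finset.sum_lt_sum_of_nonempty hPosne
        (fun j hj => mul_neg_of_neg_of_pos (hNneg i j) ((hmemPos j).mp hj))
    simpa using h1
  have hQpos : ∀ i, 0 < Q i := by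
    intro i
    have h1 : (∑ j ∈ Neg, (0:ℝ)) < ∑ j ∈ Neg, N i j * z j :=
      Finset.sum_lt_sum_of_nonempty hNegne
        (fun j hj => mul_pos_of_neg_of_neg (hNneg i j) ((hmemNeg j).mp hj))
    simpa using h1
  have hrevPQ : ∀ i, z i * (P i + Q i) ≤ 0 := by
    intro i
    have h1 := hzrev i
    rw [hsplit z i] at h1
    exact h1
  obtain ⟨k, hkPos, hkmin⟩ := Finset.exists_min_image Pos (fun i => -(P i) / Q i) hPosne
  set t : ℝ := -(P k) / Q k with htdef
  have hzk : 0 < z k := (hmemPos k).mp hkPos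
  have hQk : 0 < Q k := hQpos k
  have hPQk : P k + Q k ≤ 0 := by nlinarith [hrevPQ k, hzk]
  have ht1 : 1 ≤ t := by
    rw [htdef, le_div_iff₀ hQk]
    linarith
  set w : {i // pr i} → ℝ := fun i => if z i < 0 then t * z i else z i with hwdef
  have hwP : ∀ i, ¬ z i < 0 → w i = z i := by
    intro i h; rw [hwdef]; simp only; rw [if_neg h]
  have hwN : ∀ i, z i < 0 → w i = t * z i := by
    intro i h; rw [hwdef]; simp only; rw [if_pos h]
  have hNwv : ∀ i, N.mulVec w i = P i + t * Q i := by
    intro i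
    rw [hsplit w i]
    congr 1
    · apply Finset.sum_congr rfl
      intro j hj
      rw [hwP j (not_lt.mpr (le_of_lt ((hmemPos j).mp hj)))]
    · rw [hQdef]
      simp only
      rw [Finset.mul_sum]
      apply Finset.sum_congr rfl
      intro j hj
      rw [hwN j ((hmemNeg j).mp hj)]
      ring
  have hNwk : N.mulVec w k = 0 := by
    rw [hNwv k, htdef]
    field_simp
    ring
  have hwrev : ∀ i, w i * N.mulVec w i ≤ 0 := by
    intro i
    rw [hNwv i]
    by_cases hzi : z i < 0
    · have h1 : 0 ≤ P i + Q i := by nlinarith [hrevPQ i, hzi]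
      have hQi := hQpos i
      have h2 : 0 ≤ P i + t * Q i := by nlinarith
      have h3 : w i ≤ 0 := by rw [hwN i hzi]; nlinarith
      nlinarith
    · have hzi' : 0 < z i := lt_of_le_of_ne (not_lt.mp hzi) (Ne.symm (hznz i))
      have hti : t ≤ -(P i) / Q i := hkmin i ((hmemPos i).mpr hzi')
      have hQi := hQpos i
      have h2 : P i + t * Q i ≤ 0 := by
        have h4 : t * Q i ≤ -(P i) := (le_div_iff₀ hQi).mp hti
        linarith
      rw [hwP i hzi]
      nlinarith
  set C : Matrix {a : {i // pr i} // a ≠ k} {a : {i // pr i} // a ≠ k} ℝ :=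
    Matrix.of fun i j : {a : {i // pr i} // a ≠ k} =>
      N i j - N i k * N k j / N k k with hCdef
  have hPC : ∀ s, 0 < pm C s := fun s => schur_pprop N hNn k (hNneg k k) s
  set w' : {a : {i // pr i} // a ≠ k} → ℝ := fun i => w i with hw'def
  have hqk : qσ ≠ k := fun hh => absurd (hh ▸ hzq) (not_lt.mpr (le_of_lt hzk))
  have hw'ne : w' ≠ 0 := by
    intro hh
    have h0 := congrFun hh ⟨qσ, hqk⟩
    have h1 : w qσ = 0 := h0
    rw [hwN qσ hzq] at h1
    nlinarith
  have hCrev : ∀ i, w' i * C.mulVec w' i ≤ 0 := by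
    intro i
    have hCw : C.mulVec w' i = N.mulVec w (i : {i // pr i}) := by
      show (∑ j : {a : {i // pr i} // a ≠ k}, C i j * w' j) = _
      have e1 : ∀ j : {a : {i // pr i} // a ≠ k},
          C i j * w' j = (fun u : {i // pr i} => N (i:{i // pr i}) u * w u
            - (N (i:{i // pr i}) k / N k k) * (N k u * w u)) (j : {i // pr i}) := by
        intro j
        rw [hCdef, hw'def]
        simp only [Matrix.of_apply]
        ring
      rw [Finset.sum_congr rfl (fun j _ => e1 j)]
      have e2 : ∀ (f : {i // pr i} → ℝ), (∑ j : {a : {i // pr i} // a ≠ k}, f (j : {i // pr i}))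
          = (∑ j, f j) - f k := by
        intro f
        rw [← Finset.sum_subtype (Finset.univ.erase k) (by intro y; simp) f]
        rw [Finset.sum_erase_eq_sub (Finset.mem_univ k)]
      rw [e2 (fun u => N (i:{i // pr i}) u * w u - (N (i:{i // pr i}) k / N k k) * (N k u * w u))]
      rw [Finset.sum_sub_distrib, ← Finset.mul_sum]
      have hNk0 : (∑ j, N k j * w j) = 0 := hNwk
      have hNi : (∑ j, N (i:{i // pr i}) j * w j) = N.mulVec w (i:{i // pr i}) := rfl
      rw [hNk0, hNi]
      have hNkk := hNneg k k
      field_simp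
      ring_nf
      linear_combination (N (i : {i // pr i}) k * w k) * mul_inv_cancel₀ (ne_of_lt hNkk)
    rw [hCw]
    exact hwrev (i : {i // pr i})
  exact no_sign_reversal_of_P C hPC w' hw'ne hCrev

end NMat

theorem stmt6 {n : ℕ} (A : Matrix (Fin n) (Fin n) ℝ) (J : Finset (Fin n))
    (hJ : J.Nonempty) (hJ2 : J ≠ Finset.univ) (hB : BlockPattern A J) :
    IsNMatrix A ↔
      ∀ x : Fin n → ℝ, (∀ i, x i * A.mulVec x i ≤ 0) →
        ((∀ i ∈ J, x i ≤ 0) ∧ (∀ i ∉ J, 0 ≤ x i)) ∨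
        ((∀ i ∈ J, 0 ≤ x i) ∧ (∀ i ∉ J, x i ≤ 0)) := by
  classical
  obtain ⟨hJJ, hJcJc, hJJc, hJcJ⟩ := hB
  set D : Fin n → ℝ := fun i => if i ∈ J then (-1 : ℝ) else 1 with hDdef
  have hDJ : ∀ i ∈ J, D i = -1 := fun i hi => if_pos hi
  have hDJc : ∀ i ∉ J, D i = 1 := fun i hi => if_neg hi
  have hD1 : ∀ i, D i * D i = 1 := by
    intro i
    by_cases hi : i ∈ J
    · rw [hDJ i hi]; norm_num
    · rw [hDJc i hi]; norm_num
  set B : Matrix (Fin n) (Fin n) ℝ := Matrix.of fun i j => D i * A i j * D j with hBdef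
  have hBneg : ∀ i j, B i j < 0 := by
    intro i j
    show D i * A i j * D j < 0
    by_cases hi : i ∈ J <;> by_cases hj : j ∈ J
    · rw [hDJ i hi, hDJ j hj]; nlinarith [hJJ i hi j hj]
    · rw [hDJ i hi, hDJc j hj]; nlinarith [hJJc i hi j hj]
    · rw [hDJc i hi, hDJ j hj]; nlinarith [hJcJ i hi j hj]
    · rw [hDJc i hi, hDJc j hj]; nlinarith [hJcJc i hi j hj]
  have hpm : ∀ s : Finset (Fin n), NMat.pm B s = NMat.pm A s := by
    intro s
    unfold NMat.pm
    have hfact : B.submatrix (fun i : s => (i : Fin n)) (fun j : s => (j : Fin n))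
        = Matrix.diagonal (fun i : s => D (i : Fin n)) *
          (A.submatrix (fun i : s => (i : Fin n)) (fun j : s => (j : Fin n))) *
          Matrix.diagonal (fun i : s => D (i : Fin n)) := by
      ext i j
      rw [Matrix.mul_diagonal, Matrix.diagonal_mul]
      rfl
    rw [hfact, Matrix.det_mul, Matrix.det_mul, Matrix.det_diagonal]
    have hsq : (∏ i : s, D (i : Fin n)) * (∏ i : s, D (i : Fin n)) = 1 := by
      rw [← Finset.prod_mul_distrib]
      exact Finset.prod_eq_one (fun i _ => hD1 _)
    have habc : ∀ a b : ℝ, b * b = 1 → b * a * b = a := by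
      intro a b h
      calc b * a * b = a * (b * b) := by ring
      _ = a := by rw [h, mul_one]
    exact habc _ _ hsq
  have hBmul : ∀ (y : Fin n → ℝ) (i : Fin n),
      B.mulVec y i = D i * A.mulVec (fun j => D j * y j) i := by
    intro y i
    show (∑ j, B i j * y j) = D i * ∑ j, A i j * (D j * y j)
    rw [Finset.mul_sum]
    apply Finset.sum_congr rfl
    intro j _
    show D i * A i j * D j * y j = _
    ring
  constructor
  · intro hNA x hx
    have hNB : ∀ s : Finset (Fin n), s.Nonempty → NMat.pm B s < 0 := by
      intro s hs
      rw [hpm s]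
      exact hNA s hs
    set y : Fin n → ℝ := fun i => D i * x i with hydef
    have hxy : (fun j => D j * y j) = x := by
      funext j
      show D j * (D j * x j) = x j
      rw [← mul_assoc, hD1 j, one_mul]
    have hyrev : ∀ i, y i * B.mulVec y i ≤ 0 := by
      intro i
      have h5 : y i * B.mulVec y i = x i * A.mulVec x i := by
        rw [hBmul y i, hxy]
        have h6 : D i * y i = x i := by
          show D i * (D i * x i) = x i
          rw [← mul_assoc, hD1 i, one_mul]
        calc y i * (D i * A.mulVec x i) = (D i * y i) * A.mulVec x i := by ring
        _ = x i * A.mulVec x i := by rw [h6]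
      rw [h5]
      exact hx i
    rcases NMat.core_forward B hBneg hNB y hyrev with h | h
    · right
      constructor
      · intro i hi
        have := h i
        show 0 ≤ x i
        have hyi : y i = -x i := by show D i * x i = -x i; rw [hDJ i hi]; ring
        rw [hyi] at this
        linarith
      · intro i hi
        have := h i
        have hyi : y i = x i := by show D i * x i = x i; rw [hDJc i hi]; ring
        rw [hyi] at this
        exact this
    · left
      constructor
      · intro i hi
        have := h i
        have hyi : y i = -x i := by show D i * x i = -x i; rw [hDJ i hi]; ring
        rw [hyi] at this
        linarith
      · intro i hi
        have := h i
        have hyi : y i = x i := by show D i * x i = x i; rw [hDJc i hi]; ring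
        rw [hyi] at this
        exact this
  · intro hSR
    show ∀ s : Finset (Fin n), s.Nonempty →
      (A.submatrix (fun i : s => (i : Fin n)) (fun j : s => (j : Fin n))).det < 0
    intro s hs
    have hNB := NMat.core_backward B hBneg ?_ s hs
    · rw [hpm s] at hNB
      exact hNB
    · intro y hy
      set x : Fin n → ℝ := fun i => D i * y i with hxdef
      have hxrev : ∀ i, x i * A.mulVec x i ≤ 0 := by
        intro i
        have h5 : x i * A.mulVec x i = y i * B.mulVec y i := by
          rw [hBmul y i]
          calc x i * A.mulVec x i = (D i * y i) * A.mulVec (fun j => D j * y j) i := rfl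
          _ = y i * (D i * A.mulVec (fun j => D j * y j) i) := by ring
        rw [h5]
        exact hy i
      rcases hSR x hxrev with ⟨h1, h2⟩ | ⟨h1, h2⟩
      · right
        intro i
        by_cases hi : i ∈ J
        · have := h1 i hi
          have hyi : y i = -x i := by
            show y i = -(D i * y i)
            rw [hDJ i hi]; ring
          rw [hyi]
          linarith
        · have := h2 i hi
          have hyi : y i = x i := by
            show y i = D i * y i
            rw [hDJc i hi]; ring
          rw [hyi]
          exact this
      · left
        intro i
        by_cases hi : i ∈ J
        · have := h1 i hi
          have hyi : y i = -x i := by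
            show y i = -(D i * y i)
            rw [hDJ i hi]; ring
          rw [hyi]
          linarith
        · have := h2 i hi
          have hyi : y i = x i := by
            show y i = D i * y i
            rw [hDJc i hi]; ring
          rw [hyi]
          exact this
end

section
/- Let A, B ∈ ℝ^{n×n} be such that every matrix in the interval hull I(A,B) is an N-matrix of the second category. Then for each nonzero x ∈ ℝ^n with x ≰ 0 and x ≱ 0, there exists an index i such that x_i (Cx)_i > 0 for all C ∈ I(A,B). -/
open Matrix Finset

set_option linter.unusedSectionVars false

section Aux

variable {ι : Type} [Fintype ι] [DecidableEq ι]

/-- All principal minors (given by injective tuples) are positive. -/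
def Pmin (A : Matrix ι ι ℝ) : Prop :=
  ∀ (k : ℕ) (f : Fin k → ι), Function.Injective f → 0 < (A.submatrix f f).det

/-- All nonempty principal minors are negative. -/
def Nmin (A : Matrix ι ι ℝ) : Prop :=
  ∀ (k : ℕ) (f : Fin k → ι), Function.Injective f → k ≠ 0 → (A.submatrix f f).det < 0

theorem Pmin.submatrix {κ : Type} [Fintype κ] [DecidableEq κ] {A : Matrix ι ι ℝ}
    (hA : Pmin A) (g : κ → ι) (hg : Function.Injective g) : Pmin (A.submatrix g g) := by
  intro k f hf
  rw [Matrix.submatrix_submatrix]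
  exact hA k (g ∘ f) (hg.comp hf)

theorem Pmin.det_pos {A : Matrix ι ι ℝ} (hA : Pmin A) : 0 < A.det := by
  have h := hA (Fintype.card ι) (Fintype.equivFin ι).symm (Equiv.injective _)
  rwa [Matrix.det_submatrix_equiv_self] at h

theorem Nmin.diag_neg {A : Matrix ι ι ℝ} (hA : Nmin A) (i : ι) : A i i < 0 := by
  have h := hA 1 (fun _ => i) (fun a b _ => Subsingleton.elim a b) one_ne_zero
  simpa [Matrix.det_fin_one] using h

theorem Nmin.entry_neg {A : Matrix ι ι ℝ} (hA : Nmin A) (hE : ∀ i j, A i j ≤ 0)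
    (i j : ι) : A i j < 0 := by
  rcases eq_or_ne i j with rfl | hij
  · exact hA.diag_neg i
  · have hfinj : Function.Injective (![i, j]) := by
      intro a b hab
      fin_cases a <;> fin_cases b <;> simp_all
    have hdet := hA 2 (![i, j]) hfinj two_ne_zero
    rw [Matrix.det_fin_two] at hdet
    simp only [Matrix.submatrix_apply, Matrix.cons_val_zero, Matrix.cons_val_one,
      Matrix.head_cons] at hdet
    have hii := hA.diag_neg i
    have hjj := hA.diag_neg j
    rcases lt_or_eq_of_le (hE i j) with h | h
    · exact h
    · exfalso
      have : A i j * A j i = 0 := by rw [h, zero_mul]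
      nlinarith

end Aux

section Pdet

variable {ι : Type} [Fintype ι] [DecidableEq ι]

theorem det_updateRow_single_s7 (M : Matrix ι ι ℝ) (a : ι) :
    (M.updateRow a (Pi.single a 1)).det
      = (M.submatrix (fun i : {i // i ≠ a} => (i : ι)) (fun j : {i // i ≠ a} => (j : ι))).det := by
  classical
  haveI : Unique {i // i = a} := ⟨⟨⟨a, rfl⟩⟩, fun b => Subtype.ext b.2⟩
  let e : {i // i = a} ⊕ {i // ¬ i = a} ≃ ι := Equiv.sumCompl (· = a)
  rw [← Matrix.det_submatrix_equiv_self e]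
  have hblock : (M.updateRow a (Pi.single a 1)).submatrix e e =
      Matrix.fromBlocks (Matrix.of fun _ _ => (1 : ℝ)) 0
        (Matrix.of fun (i : {i // ¬ i = a}) (_ : {i // i = a}) => M i.val a)
        (M.submatrix (fun i : {i // ¬ i = a} => (i : ι)) (fun j : {i // ¬ i = a} => (j : ι))) := by
    ext i j
    rcases i with i | i <;> rcases j with j | j <;>
      simp [e, Equiv.sumCompl, Matrix.updateRow_apply, Pi.single_apply, i.2, j.2,
        Matrix.fromBlocks]
  rw [hblock, Matrix.det_fromBlocks_zero₁₂, Matrix.det_unique]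
  simp

theorem pdet : ∀ (N : ℕ) (ι : Type) [Fintype ι] [DecidableEq ι] (A : Matrix ι ι ℝ)
    (d : ι → ℝ), Fintype.card ι ≤ N → Pmin A → (∀ i, 0 ≤ d i) →
    0 < (A + Matrix.diagonal d).det := by
  intro N
  induction N with
  | zero =>
    intro ι _ _ A d hcard hA hd
    haveI : IsEmpty ι := Fintype.card_eq_zero_iff.mp (Nat.le_zero.mp hcard)
    rw [Matrix.det_isEmpty]; norm_num
  | succ N ih =>
    intro ι _ _ A d hcard hA hd
    have inner : ∀ u : Finset ι,
        0 < (A + Matrix.diagonal (fun i => if i ∈ u then d i else 0)).det := by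
      intro u
      induction u using Finset.induction_on with
      | empty =>
        have h0 : (fun i => if i ∈ (∅ : Finset ι) then d i else 0) = fun _ => (0:ℝ) := by
          funext i; simp
        rw [h0, Matrix.diagonal_zero, add_zero]
        exact hA.det_pos
      | @insert a u ha ihu =>
        set M := A + Matrix.diagonal (fun i => if i ∈ u then d i else 0) with hM
        have hrow : A + Matrix.diagonal (fun i => if i ∈ insert a u then d i else 0)
            = M.updateRow a (M a + Pi.single a (d a)) := by
          ext i j
          by_cases hia : i = a
          · subst hia
            rw [Matrix.updateRow_self]
            simp only [Matrix.add_apply, Matrix.diagonal_apply, Pi.add_apply, hM,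
              Pi.single_apply, Finset.mem_insert]
            by_cases hij : i = j
            · subst hij; simp [ha]
            · simp [hij, Ne.symm hij]
          · rw [Matrix.updateRow_ne hia]
            simp only [Matrix.add_apply, Matrix.diagonal_apply, hM, Finset.mem_insert]
            by_cases hij : i = j
            · subst hij; simp [hia]
            · simp [hij]
        rw [hrow, Matrix.det_updateRow_add, Matrix.updateRow_eq_self]
        have hsingle : Pi.single a (d a) = d a • (Pi.single a 1 : ι → ℝ) := by
          funext j; by_cases hj : j = a <;> simp [Pi.single_apply, hj]
        rw [hsingle, Matrix.det_updateRow_smul, det_updateRow_single_s7]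
        have hminor : 0 < (M.submatrix (fun i : {i // i ≠ a} => (i : ι))
            (fun j : {i // i ≠ a} => (j : ι))).det := by
          have h3 : M.submatrix (fun i : {i // i ≠ a} => (i : ι))
              (fun j : {i // i ≠ a} => (j : ι))
              = A.submatrix (fun i : {i // i ≠ a} => (i : ι)) (fun j : {i // i ≠ a} => (j : ι))
                + Matrix.diagonal (fun i : {i // i ≠ a} => if (i : ι) ∈ u then d i else 0) := by
            ext i j
            simp only [hM, Matrix.submatrix_apply, Matrix.add_apply, Matrix.diagonal_apply]
            by_cases hij : i = j
            · subst hij; simp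
            · have : (i : ι) ≠ (j : ι) := fun hc => hij (Subtype.ext hc)
              simp [hij, this]
          have hcard' : Fintype.card {i // i ≠ a} ≤ N := by
            have hlt : Fintype.card {i // i ≠ a} < Fintype.card ι :=
              Fintype.card_subtype_lt (x := a) (by simp)
            omega
          rw [h3]
          exact ih _ _ _ hcard'
            (hA.submatrix _ Subtype.val_injective)
            (fun i => by by_cases h : (i : ι) ∈ u <;> simp [h, hd (i : ι)])
        have hterm : 0 ≤ d a * (M.submatrix (fun i : {i // i ≠ a} => (i : ι))
            (fun j : {i // i ≠ a} => (j : ι))).det := mul_nonneg (hd a) hminor.le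
        linarith [ihu]
    have := inner Finset.univ
    have huniv : (fun i => if i ∈ (Finset.univ : Finset ι) then d i else 0) = d := by
      funext i; simp
    rwa [huniv] at this

end Pdet

section Schur

variable {ι : Type} [Fintype ι] [DecidableEq ι]

/-- Schur complement of the entry `(p,p)`. -/
noncomputable def schurC (A : Matrix ι ι ℝ) (p : ι) :
    Matrix {i // i ≠ p} {i // i ≠ p} ℝ :=
  fun i j => A i j - A i p * A p j / A p p

theorem schur_pmin {A : Matrix ι ι ℝ} (hA : Nmin A) (p : ι) : Pmin (schurC A p) := by
  have hApp : A p p < 0 := hA.diag_neg p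
  have hApp' : A p p ≠ 0 := ne_of_lt hApp
  intro k f hf
  set g : Fin 1 ⊕ Fin k → ι := Sum.elim (fun _ => p) (fun j => ((f j) : ι)) with hg
  have hginj : Function.Injective g := by
    rintro (a | a) (b | b) hab
    · exact congrArg Sum.inl (Subsingleton.elim a b)
    · exact absurd hab.symm (f b).2
    · exact absurd hab (f a).2
    · exact congrArg Sum.inr (hf (Subtype.ext hab))
  have hdet : (A.submatrix g g).det < 0 := by
    have h5 := hA (1 + k) (g ∘ (finSumFinEquiv (m := 1) (n := k)).symm)
      (hginj.comp (Equiv.injective _)) (by omega)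
    rwa [← Matrix.submatrix_submatrix, Matrix.det_submatrix_equiv_self] at h5
  have hblock : A.submatrix g g =
      Matrix.fromBlocks (Matrix.of fun _ _ => A p p)
        (Matrix.of fun _ j => A p (f j)) (Matrix.of fun i _ => A (f i) p)
        (Matrix.of fun i j => A (f i) (f j)) := by
    ext i j
    rcases i with i | i <;> rcases j with j | j <;> rfl
  haveI : Invertible (Matrix.of fun _ _ => A p p : Matrix (Fin 1) (Fin 1) ℝ) := by
    apply Matrix.invertibleOfIsUnitDet
    rw [Matrix.det_fin_one]
    exact isUnit_iff_ne_zero.mpr hApp'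
  rw [hblock, Matrix.det_fromBlocks₁₁] at hdet
  have hinv : (⅟(Matrix.of fun _ _ => A p p : Matrix (Fin 1) (Fin 1) ℝ))
      = Matrix.of fun _ _ => (A p p)⁻¹ := by
    rw [Matrix.invOf_eq_nonsing_inv]
    apply Matrix.inv_eq_right_inv
    ext i j
    have : i = j := Subsingleton.elim i j
    subst this
    simp [Matrix.mul_apply, Fin.sum_univ_one, hApp']
  rw [hinv] at hdet
  have hDC : (Matrix.of fun i j => A (f i) (f j)) -
      ((Matrix.of fun i _ => A (f i) p : Matrix (Fin k) (Fin 1) ℝ) *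
        (Matrix.of fun _ _ => (A p p)⁻¹ : Matrix (Fin 1) (Fin 1) ℝ)) *
        (Matrix.of fun _ j => A p (f j) : Matrix (Fin 1) (Fin k) ℝ)
      = (schurC A p).submatrix f f := by
    ext i j
    simp [Matrix.mul_apply, Fin.sum_univ_one, schurC, div_eq_mul_inv]
    ring
  rw [Matrix.det_fin_one] at hdet
  simp only [Matrix.of_apply] at hdet
  rw [← hDC]
  nlinarith [hdet, hApp]

end Schur

section Conv

theorem IsNMatrix.nmin {n : ℕ} {A : Matrix (Fin n) (Fin n) ℝ} (h : IsNMatrix A) :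
    Nmin A := by
  intro k f hf hk
  set s : Finset (Fin n) := Finset.univ.image f with hs
  have hsne : s.Nonempty := ⟨f ⟨0, Nat.pos_of_ne_zero hk⟩, by simp [hs]⟩
  let e : Fin k ≃ {i // i ∈ s} :=
    (Equiv.ofInjective f hf).trans (Equiv.subtypeEquivRight (by intro x; simp [hs, eq_comm]))
  have hsub : A.submatrix f f
      = (A.submatrix (fun i : s => (i : Fin n)) (fun j : s => (j : Fin n))).submatrix e e := by
    ext i j; rfl
  rw [hsub, Matrix.det_submatrix_equiv_self]
  exact h s hsne

theorem mulVec_restrict {ι : Type} [Fintype ι] [DecidableEq ι] (M : Matrix ι ι ℝ)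
    (v : ι → ℝ) (P : ι → Prop) [DecidablePred P] (hv : ∀ i, ¬ P i → v i = 0) (i : {i // P i}) :
    (M.submatrix (fun i : {i // P i} => (i : ι)) (fun j : {i // P i} => (j : ι))).mulVec
      (fun j : {i // P i} => v j) i = M.mulVec v (i : ι) := by
  simp only [Matrix.mulVec, dotProduct, Matrix.submatrix_apply]
  rw [← Finset.sum_subtype (Finset.univ.filter P)
    (by intro j; simp) (fun j => M (i : ι) j * v j)]
  apply Finset.sum_subset (Finset.filter_subset _ _)
  intro j _ hj
  rw [hv j (by simpa using hj), mul_zero]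

end Conv

theorem keyLemma {n : ℕ} {A : Matrix (Fin n) (Fin n) ℝ}
    (hN : Nmin A) (hE : ∀ i j, A i j ≤ 0) (x : Fin n → ℝ) (p0 q0 : Fin n)
    (hp0 : 0 < x p0) (hq0 : x q0 < 0)
    (hrev : ∀ i, x i * A.mulVec x i ≤ 0) : False := by
  classical
  have hneg : ∀ i j, A i j < 0 := hN.entry_neg hE
  set J : Finset (Fin n) := Finset.univ.filter (fun j => 0 < x j) with hJdef
  set K : Finset (Fin n) := Finset.univ.filter (fun j => x j < 0) with hKdef
  have hJ : J.Nonempty := ⟨p0, by simp [hJdef, hp0]⟩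
  have hK : K.Nonempty := ⟨q0, by simp [hKdef, hq0]⟩
  set Sj : Fin n → ℝ := fun i => ∑ j ∈ J, A i j * x j with hSjdef
  set Sk : Fin n → ℝ := fun i => ∑ j ∈ K, A i j * x j with hSkdef
  have hSj : ∀ i, Sj i < 0 := fun i =>
    Finset.sum_neg (fun j hj => mul_neg_of_neg_of_pos (hneg i j)
      (by simp [hJdef] at hj; exact hj)) hJ
  have hSk : ∀ i, 0 < Sk i :=
    fun i => Finset.sum_pos (fun j hj => mul_pos_of_neg_of_neg (hneg i j)
      (by simp [hKdef] at hj; exact hj)) hK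
  -- splitting of the mulVec for scaled vectors
  have split : ∀ (u : ℝ) (i : Fin n),
      A.mulVec (fun j => if 0 < x j then u * x j else x j) i = u * Sj i + Sk i := by
    intro u i
    have hterm : ∀ j, A i j * (if 0 < x j then u * x j else x j)
        = (if 0 < x j then u * (A i j * x j) else 0)
          + (if x j < 0 then A i j * x j else 0) := by
      intro j
      by_cases h1 : 0 < x j
      · have h2 : ¬ x j < 0 := asymm h1
        simp [h1, h2]; ring
      · by_cases h2 : x j < 0
        · simp [h1, h2]
        · have h3 : x j = 0 := le_antisymm (not_lt.mp h1) (not_lt.mp h2)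
          simp [h1, h2, h3]
    simp only [Matrix.mulVec, dotProduct]
    rw [Finset.sum_congr rfl (fun j _ => hterm j), Finset.sum_add_distrib,
      ← Finset.sum_filter, ← Finset.sum_filter, ← hJdef, ← hKdef, ← Finset.mul_sum]
  have hxid : (fun j => if 0 < x j then (1:ℝ) * x j else x j) = x := by
    funext j; by_cases h : 0 < x j <;> simp [h]
  have base : ∀ i, A.mulVec x i = Sj i + Sk i := by
    intro i
    have := split 1 i
    rw [hxid] at this
    simpa using this
  -- the scaling factor
  set t : Fin n → ℝ := fun i => Sk i / (-Sj i) with htdef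
  have ht_pos : ∀ i, 0 < t i := fun i => div_pos (hSk i) (neg_pos.mpr (hSj i))
  have ht_mul : ∀ i, t i * Sj i = - Sk i := by
    intro i
    have : Sj i ≠ 0 := ne_of_lt (hSj i)
    field_simp [htdef]
    simp only [htdef]
    rw [div_neg, neg_mul, div_mul_cancel₀ _ this]
  have ht_le1 : ∀ i ∈ J, t i ≤ 1 := by
    intro i hi
    have hxi : 0 < x i := by simp [hJdef] at hi; exact hi
    have hAx : A.mulVec x i ≤ 0 := by nlinarith [hrev i]
    rw [base] at hAx
    rw [htdef]
    rw [div_le_one (neg_pos.mpr (hSj i))]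
    linarith
  set ts : ℝ := J.sup' hJ t with htsdef
  obtain ⟨pp, hppJ, hppeq⟩ := Finset.exists_mem_eq_sup' hJ t
  have hxpp : 0 < x pp := by simp [hJdef] at hppJ; exact hppJ
  have hts_pos : 0 < ts := by rw [htsdef, hppeq]; exact ht_pos pp
  have hts_le1 : ts ≤ 1 := by rw [htsdef, hppeq]; exact ht_le1 pp hppJ
  have hts_ge : ∀ i ∈ J, t i ≤ ts := fun i hi => Finset.le_sup' t hi
  set y : Fin n → ℝ := fun j => if 0 < x j then ts * x j else x j with hydef
  have hAy : ∀ i, A.mulVec y i = ts * Sj i + Sk i := split ts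
  have hAypp : A.mulVec y pp = 0 := by
    rw [hAy pp]
    have := ht_mul pp
    rw [htsdef, hppeq]
    linarith
  have hyrev : ∀ i, y i * A.mulVec y i ≤ 0 := by
    intro i
    by_cases h1 : 0 < x i
    · have hiJ : i ∈ J := by simp [hJdef, h1]
      have hy : 0 < y i := by simp [hydef, h1]; positivity
      have : A.mulVec y i ≤ 0 := by
        rw [hAy i]
        have h2 : ts * Sj i ≤ t i * Sj i :=
          mul_le_mul_of_nonpos_right (hts_ge i hiJ) (hSj i).le
        have := ht_mul i
        linarith
      exact mul_nonpos_of_nonneg_of_nonpos hy.le this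
    · by_cases h2 : x i < 0
      · have hy : y i < 0 := by simpa [hydef, h1] using h2
        have hAx : 0 ≤ A.mulVec x i := by nlinarith [hrev i]
        have : 0 ≤ A.mulVec y i := by
          rw [hAy i]
          rw [base] at hAx
          nlinarith [hSj i]
        exact mul_nonpos_of_nonpos_of_nonneg hy.le this
      · have h3 : x i = 0 := le_antisymm (not_lt.mp h1) (not_lt.mp h2)
        simp [hydef, h3, h1]
  have hypp_pos : 0 < y pp := by simp [hydef, hxpp]; positivity
  have hApppp : A pp pp < 0 := hN.diag_neg pp
  have hApp' : A pp pp ≠ 0 := ne_of_lt hApppp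
  -- Schur complement step
  set S := schurC A pp with hSdef
  have hSP : Pmin S := schur_pmin hN pp
  set yv : {i // i ≠ pp} → ℝ := fun i => y i with hyvdef
  have hsubsum : ∀ c : Fin n, ∑ j : {i // i ≠ pp}, A c j * y j
      = A.mulVec y c - A c pp * y pp := by
    intro c
    rw [← Finset.sum_subtype (Finset.univ.erase pp)
      (by intro j; simp [Finset.mem_erase]) (fun j => A c j * y j)]
    rw [Finset.sum_erase_eq_sub (Finset.mem_univ pp)]
    rfl
  have hSmul : ∀ i : {i // i ≠ pp}, S.mulVec yv i = A.mulVec y i := by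
    intro i
    have expand : S.mulVec yv i
        = (∑ j : {i // i ≠ pp}, A i j * y j)
          - (A i pp / A pp pp) * (∑ j : {i // i ≠ pp}, A pp j * y j) := by
      simp only [Matrix.mulVec, dotProduct, hSdef, schurC, hyvdef]
      rw [Finset.mul_sum, ← Finset.sum_sub_distrib]
      congr 1; funext j; ring
    rw [expand, hsubsum, hsubsum, hAypp]
    field_simp
    ring
  have hyvrev : ∀ i : {i // i ≠ pp}, yv i * S.mulVec yv i ≤ 0 := by
    intro i; rw [hSmul i]; exact hyrev i
  -- restrict to the support of yv
  set T := S.submatrix (fun i : {i : {i // i ≠ pp} // yv i ≠ 0} => (i : {i // i ≠ pp}))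
    (fun j : {i : {i // i ≠ pp} // yv i ≠ 0} => (j : {i // i ≠ pp})) with hTdef
  have hTP : Pmin T := hSP.submatrix _ Subtype.val_injective
  set z : {i : {i // i ≠ pp} // yv i ≠ 0} → ℝ := fun i => yv i with hzdef
  set d : {i : {i // i ≠ pp} // yv i ≠ 0} → ℝ := fun i => -(S.mulVec yv i) / yv i with hddef
  have hd : ∀ i, 0 ≤ d i := by
    intro i
    have h1 := hyvrev i
    have h2 : yv i.val ≠ 0 := i.2
    rw [hddef, div_nonneg_iff]
    rcases lt_or_gt_of_ne h2 with h | h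
    · right; constructor <;> nlinarith
    · left; constructor <;> nlinarith
  have hTz : (T + Matrix.diagonal d).mulVec z = 0 := by
    funext i
    rw [Matrix.add_mulVec]
    have h1 : T.mulVec z i = S.mulVec yv i := by
      rw [hTdef, hzdef]
      exact mulVec_restrict S yv (fun i => yv i ≠ 0)
        (fun j hj => by simpa using hj) i
    simp only [Pi.add_apply, Matrix.mulVec_diagonal, Pi.zero_apply]
    rw [h1, hddef]
    have h2 : yv (i : {i // i ≠ pp}) ≠ 0 := i.2
    have h3 : z i = yv (i : {i // i ≠ pp}) := rfl
    rw [h3]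
    field_simp
    ring
  have hz0 : z ≠ 0 := by
    have hq0pp : q0 ≠ pp := by intro hc; rw [hc] at hq0; linarith
    have hyq0 : y q0 = x q0 := by simp [hydef, asymm hq0]
    have hyq0' : yv ⟨q0, hq0pp⟩ ≠ 0 := by rw [hyvdef]; simp [hyq0]; linarith
    intro hc
    have := congrFun hc ⟨⟨q0, hq0pp⟩, hyq0'⟩
    exact hyq0' (by simpa [hzdef] using this)
  have hdet0 : (T + Matrix.diagonal d).det = 0 :=
    Matrix.exists_mulVec_eq_zero_iff.mp ⟨z, hz0, hTz⟩
  have hdetpos : 0 < (T + Matrix.diagonal d).det :=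
    pdet (Fintype.card {i : {i // i ≠ pp} // yv i ≠ 0}) _ _ _ le_rfl hTP hd
  linarith


theorem stmt7 {n : ℕ} (A B : Matrix (Fin n) (Fin n) ℝ)
    (h : ∀ C ∈ IntervalHull A B, IsNMatrixSecond C) :
    ∀ x : Fin n → ℝ, x ≠ 0 → ¬ (∀ i, x i ≤ 0) → ¬ (∀ i, 0 ≤ x i) →
      ∃ i, ∀ C ∈ IntervalHull A B, 0 < x i * C.mulVec x i := by
  intro x hx hle hge
  by_contra hcon
  push_neg at hcon hle hge
  obtain ⟨p0, hp0⟩ := hle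
  obtain ⟨q0, hq0⟩ := hge
  choose C hC1 hC2 using hcon
  set D : Matrix (Fin n) (Fin n) ℝ := Matrix.of (fun i j => C i i j) with hD
  have hDmem : D ∈ IntervalHull A B := fun i j => hC1 i i j
  have hDN := h D hDmem
  have hrev : ∀ i, x i * D.mulVec x i ≤ 0 := by
    intro i
    have : D.mulVec x i = (C i).mulVec x i := rfl
    rw [this]
    exact hC2 i
  exact keyLemma hDN.1.nmin hDN.2 x p0 q0 hp0 hq0 hrev
end

section
/- Let J be a nonempty proper subset of {1,…,n} and A, B ∈ ℝ^{n×n} with max(a_{ii}, b_{ii}) < 0 for all i. Then every matrix in I(A,B) is an N-matrix of the first category with respect to J if and only if I_z is an N-matrix of the first category with respect to J for all z ∈ {±1}^n with z ∉ {±e^J}, where e^J_i = 1 for i ∈ J and −1 for i ∉ J, and I_z = I_c − D_z Δ D_z. -/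
set_option maxHeartbeats 1600000
set_option linter.unusedSectionVars false


open Matrix Finset

lemma Iz_apply {n : ℕ} (A B : Matrix (Fin n) (Fin n) ℝ) (z : Fin n → ℝ) (i j : Fin n) :
    Iz A B z i j = Ic A B i j - z i * Dlt A B i j * z j := by
  simp [Iz, Matrix.sub_apply, Matrix.mul_diagonal, Matrix.diagonal_mul]

lemma Ic_sub_Dlt {n m : ℕ} (A B : Matrix (Fin m) (Fin n) ℝ) (i j) :
    Ic A B i j - Dlt A B i j = Il A B i j := by
  have := min_add_max (A i j) (B i j)
  simp only [Ic, Dlt, Iu, Il] at *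
  linarith

lemma Ic_add_Dlt {n m : ℕ} (A B : Matrix (Fin m) (Fin n) ℝ) (i j) :
    Ic A B i j + Dlt A B i j = Iu A B i j := by
  have := min_add_max (A i j) (B i j)
  simp only [Ic, Dlt, Iu, Il] at *
  linarith

lemma Dlt_nonneg {n m : ℕ} (A B : Matrix (Fin m) (Fin n) ℝ) (i j) :
    0 ≤ Dlt A B i j := by
  simp only [Dlt, Iu, Il]
  have := min_le_max (a := A i j) (b := B i j)
  linarith

lemma mem_hull_iff {m n : ℕ} (A B C : Matrix (Fin m) (Fin n) ℝ) :
    C ∈ IntervalHull A B ↔ ∀ i j, Il A B i j ≤ C i j ∧ C i j ≤ Iu A B i j := by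
  constructor
  · intro h i j
    obtain ⟨t, ⟨ht0, ht1⟩, heq⟩ := h i j
    rw [heq]
    constructor
    · have h1 := mul_nonneg ht0 (sub_nonneg.mpr (min_le_left (A i j) (B i j)))
      have h2 := mul_nonneg (by linarith : (0:ℝ) ≤ 1 - t)
        (sub_nonneg.mpr (min_le_right (A i j) (B i j)))
      simp only [Il]
      nlinarith
    · have h1 := mul_nonneg ht0 (sub_nonneg.mpr (le_max_left (A i j) (B i j)))
      have h2 := mul_nonneg (by linarith : (0:ℝ) ≤ 1 - t)
        (sub_nonneg.mpr (le_max_right (A i j) (B i j)))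
      simp only [Iu]
      nlinarith
  · intro h i j
    obtain ⟨hlo, hhi⟩ := h i j
    simp only [Il, Iu] at hlo hhi
    rcases eq_or_ne (A i j) (B i j) with he | he
    · refine ⟨1, ⟨zero_le_one, le_refl 1⟩, ?_⟩
      rw [← he] at hlo hhi
      have : C i j = A i j := le_antisymm (by simpa using hhi) (by simpa using hlo)
      rw [this]; ring
    · have hne : A i j - B i j ≠ 0 := sub_ne_zero.mpr he
      refine ⟨(C i j - B i j) / (A i j - B i j), ⟨?_, ?_⟩, by field_simp; ring⟩
      · rcases lt_or_gt_of_ne he with hab | hab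
        · rw [min_eq_left hab.le] at hlo
          rw [max_eq_right hab.le] at hhi
          rw [div_nonneg_iff]
          right; constructor <;> linarith
        · rw [min_eq_right hab.le] at hlo
          rw [max_eq_left hab.le] at hhi
          apply div_nonneg <;> linarith
      · rcases lt_or_gt_of_ne he with hab | hab
        · rw [min_eq_left hab.le] at hlo
          rw [max_eq_right hab.le] at hhi
          rw [div_le_one_iff]
          right; right; constructor <;> linarith
        · rw [min_eq_right hab.le] at hlo
          rw [max_eq_left hab.le] at hhi
          rw [div_le_one (by linarith)]
          linarith

lemma Iz_entry_cases {n : ℕ} (A B : Matrix (Fin n) (Fin n) ℝ) {z : Fin n → ℝ}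
    (hz : SignVec z) (i j : Fin n) :
    Iz A B z i j = Il A B i j ∨ Iz A B z i j = Iu A B i j := by
  rw [Iz_apply]
  rcases hz i with h1 | h1 <;> rcases hz j with h2 | h2 <;> rw [h1, h2]
  · left; rw [← Ic_sub_Dlt]; ring
  · right; rw [← Ic_add_Dlt]; ring
  · right; rw [← Ic_add_Dlt]; ring
  · left; rw [← Ic_sub_Dlt]; ring

lemma Iz_mem_hull {n : ℕ} (A B : Matrix (Fin n) (Fin n) ℝ) {z : Fin n → ℝ}
    (hz : SignVec z) : Iz A B z ∈ IntervalHull A B := by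
  rw [mem_hull_iff]
  intro i j
  have hmm : Il A B i j ≤ Iu A B i j := min_le_max
  rcases Iz_entry_cases A B hz i j with h | h <;> rw [h]
  · exact ⟨le_refl _, hmm⟩
  · exact ⟨hmm, le_refl _⟩

lemma det_inj_neg {n k : ℕ} {A : Matrix (Fin n) (Fin n) ℝ} (hA : IsNMatrix A)
    (f : Fin (k + 1) → Fin n) (hf : Function.Injective f) :
    (A.submatrix f f).det < 0 := by
  classical
  set s : Finset (Fin n) := Finset.univ.image f with hs
  have hmem : ∀ a, f a ∈ s := fun a => Finset.mem_image_of_mem f (Finset.mem_univ a)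
  set g : Fin (k + 1) → {x // x ∈ s} := fun a => ⟨f a, hmem a⟩ with hg
  have hginj : Function.Injective g := fun a b hab => hf (congrArg Subtype.val hab)
  have hcard : Fintype.card {x // x ∈ s} = k + 1 := by
    rw [Fintype.card_coe, hs, Finset.card_image_of_injective _ hf, Finset.card_univ,
      Fintype.card_fin]
  have hbij : Function.Bijective g :=
    (Fintype.bijective_iff_injective_and_card g).mpr ⟨hginj, by simp [hcard]⟩
  set e : Fin (k + 1) ≃ {x // x ∈ s} := Equiv.ofBijective g hbij with he
  have key : A.submatrix f f
      = (A.submatrix (fun i : {x // x ∈ s} => (i : Fin n))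
          (fun j : {x // x ∈ s} => (j : Fin n))).submatrix e e := by
    ext a b
    rfl
  rw [key, Matrix.det_submatrix_equiv_self]
  exact hA s ⟨f 0, hmem 0⟩



section Core
variable {ι : Type} [Fintype ι] [DecidableEq ι]

def PmatI (M : Matrix ι ι ℝ) : Prop :=
  ∀ (k : ℕ) (f : Fin k → ι), Function.Injective f → 0 < (M.submatrix f f).det

def NmatI (M : Matrix ι ι ℝ) : Prop :=
  ∀ (k : ℕ) (f : Fin (k + 1) → ι), Function.Injective f → (M.submatrix f f).det < 0

noncomputable def sc (M : Matrix ι ι ℝ) (p : ι) :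
    Matrix {i : ι // i ≠ p} {i : ι // i ≠ p} ℝ :=
  fun i j => M i j - M i p * M p j / M p p

lemma NmatI.diag_neg {M : Matrix ι ι ℝ} (hM : NmatI M) (p : ι) : M p p < 0 := by
  have := hM 0 (fun _ => p) (fun a b _ => Fin.ext (by omega))
  simpa [Matrix.det_fin_one] using this

lemma PmatI.diag_pos {M : Matrix ι ι ℝ} (hM : PmatI M) (p : ι) : 0 < M p p := by
  have := hM 1 (fun _ => p) (fun a b _ => Fin.ext (by omega))
  simpa [Matrix.det_fin_one] using this

lemma sum_split (p : ι) (F : ι → ℝ) :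
    ∑ i : ι, F i = F p + ∑ i : {x : ι // x ≠ p}, F ↑i := by
  rw [← Finset.sum_subtype (Finset.univ \ {p}) (by simp) F]
  rw [Finset.sum_eq_sum_sdiff_singleton_add (Finset.mem_univ p)]
  ring

lemma snoc_injective {k : ℕ} {p : ι} (f : Fin k → {i : ι // i ≠ p})
    (hf : Function.Injective f) :
    Function.Injective (Fin.snoc (fun a => (f a : ι)) p : Fin (k + 1) → ι) := by
  intro a b hab
  rcases Fin.eq_castSucc_or_eq_last a with ⟨a', rfl⟩ | rfl <;>
    rcases Fin.eq_castSucc_or_eq_last b with ⟨b', rfl⟩ | rfl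
  · simp only [Fin.snoc_castSucc] at hab
    exact congrArg Fin.castSucc (hf (Subtype.ext hab))
  · simp only [Fin.snoc_castSucc, Fin.snoc_last] at hab
    exact absurd hab (f a').2
  · simp only [Fin.snoc_castSucc, Fin.snoc_last] at hab
    exact absurd hab.symm (f b').2
  · rfl

lemma schur_det (M : Matrix ι ι ℝ) (p : ι) (hp : M p p ≠ 0) {k : ℕ}
    (f : Fin k → {i : ι // i ≠ p}) :
    (M.submatrix (Fin.snoc (fun a => (f a : ι)) p) (Fin.snoc (fun a => (f a : ι)) p)).det
      = M p p * ((sc M p).submatrix f f).det := by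
  classical
  set g : Fin (k + 1) → ι := Fin.snoc (fun a => (f a : ι)) p with hg
  set A : Matrix (Fin k) (Fin k) ℝ := Matrix.of fun a b => M (f a) (f b) with hA
  set B : Matrix (Fin k) (Fin 1) ℝ := Matrix.of fun a _ => M (f a) p with hB
  set C : Matrix (Fin 1) (Fin k) ℝ := Matrix.of fun _ b => M p (f b) with hC
  set D : Matrix (Fin 1) (Fin 1) ℝ := Matrix.of fun _ _ => M p p with hD
  have hdetD : D.det = M p p := by simp [Matrix.det_fin_one, hD]
  haveI : Invertible D.det := by rw [hdetD]; exact invertibleOfNonzero hp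
  haveI hDinv : Invertible D := Matrix.invertibleOfDetInvertible D
  have hinvD : ⅟D = (M p p)⁻¹ • (1 : Matrix (Fin 1) (Fin 1) ℝ) := by
    rw [Matrix.invOf_eq_nonsing_inv, Matrix.inv_def, Matrix.adjugate_fin_one, hdetD,
      Ring.inverse_eq_inv']
  have he1 : ∀ a : Fin k, (finSumFinEquiv.symm (Fin.castSucc a) : Fin k ⊕ Fin 1) = Sum.inl a := by
    intro a
    rw [Equiv.symm_apply_eq, finSumFinEquiv_apply_left]
    rfl
  have he2 : (finSumFinEquiv.symm (Fin.last k) : Fin k ⊕ Fin 1) = Sum.inr 0 := by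
    rw [Equiv.symm_apply_eq, finSumFinEquiv_apply_right]
    ext
    simp
  have key : M.submatrix g g
      = (Matrix.fromBlocks A B C D).submatrix finSumFinEquiv.symm finSumFinEquiv.symm := by
    ext x y
    rcases Fin.eq_castSucc_or_eq_last x with ⟨x', rfl⟩ | rfl <;>
      rcases Fin.eq_castSucc_or_eq_last y with ⟨y', rfl⟩ | rfl <;>
        simp [he1, he2, hg, Fin.snoc_castSucc, Fin.snoc_last, hA, hB, hC, hD]
  rw [key, Matrix.det_submatrix_equiv_self, Matrix.det_fromBlocks₂₂, hdetD]
  congr 1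
  congr 1
  ext a b
  rw [hinvD]
  simp only [Matrix.smul_apply, Matrix.sub_apply, Matrix.mul_apply, Fin.sum_univ_one,
    Matrix.smul_apply, Matrix.one_apply, Matrix.submatrix_apply]
  simp [hA, hB, hC, sc, smul_eq_mul]
  ring

lemma Pmat_sc {M : Matrix ι ι ℝ} (hM : PmatI M) (p : ι) : PmatI (sc M p) := by
  have hpp := hM.diag_pos p
  intro k f hf
  have h := schur_det M p hpp.ne' f
  have h1 := hM (k + 1) _ (snoc_injective f hf)
  rw [h] at h1
  rcases mul_pos_iff.mp h1 with ⟨_, h⟩ | ⟨h, _⟩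
  · exact h
  · linarith

lemma Nmat_sc {M : Matrix ι ι ℝ} (hM : NmatI M) (p : ι) : PmatI (sc M p) := by
  have hpp := hM.diag_neg p
  intro k f hf
  have h := schur_det M p hpp.ne f
  have h1 := hM k _ (snoc_injective f hf)
  rw [h] at h1
  rcases mul_neg_iff.mp h1 with ⟨h2, h3⟩ | ⟨h2, h3⟩
  · linarith
  · exact h3

lemma tighten (M : Matrix ι ι ℝ) (w : ι → ℝ) (hw : ∀ i, 0 < w i)
    (hMw : ∀ i, M.mulVec w i ≤ 0) (j i₀ : ι) (h₀ : 0 < M i₀ j) :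
    ∃ (p : ι) (w' : ι → ℝ), (∀ i, 0 < w' i) ∧ (∀ i, M.mulVec w' i ≤ 0) ∧
      M.mulVec w' p = 0 ∧ 0 < M p j := by
  classical
  set I := Finset.univ.filter (fun i => 0 < M i j) with hI
  have hne : I.Nonempty := ⟨i₀, by simp [hI, h₀]⟩
  obtain ⟨p, hpI, hpmin⟩ := I.exists_min_image (fun i => -(M.mulVec w i) / M i j) hne
  have hpj : 0 < M p j := by simpa [hI] using hpI
  set t := -(M.mulVec w p) / M p j with htdef
  have ht : 0 ≤ t := div_nonneg (by linarith [hMw p]) hpj.le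
  have hmv : ∀ i, M.mulVec (w + Pi.single j t) i = M.mulVec w i + M i j * t := by
    intro i
    rw [Matrix.mulVec_add, Matrix.mulVec_single]
    simp
    ring
  refine ⟨p, w + Pi.single j t, ?_, ?_, ?_, hpj⟩
  · intro i
    simp only [Pi.add_apply, Pi.single_apply]
    split_ifs <;> [linarith [hw i]; simpa using hw i]
  · intro i
    rw [hmv i]
    rcases le_or_gt (M i j) 0 with h | h
    · have : M i j * t ≤ 0 := mul_nonpos_of_nonpos_of_nonneg h ht
      linarith [hMw i]
    · have hiI : i ∈ I := by simp [hI, h]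
      have h1 := hpmin i hiI
      have h2 : t * M i j ≤ -(M.mulVec w i) := (le_div_iff₀ h).mp h1
      nlinarith
  · rw [hmv p]
    have : M p j * t = -(M.mulVec w p) := by
      rw [htdef, mul_div_cancel₀ _ hpj.ne']
    rw [this]; ring

lemma sc_mulVec (M : Matrix ι ι ℝ) (p : ι) (hp : M p p ≠ 0) (w : ι → ℝ)
    (htight : M.mulVec w p = 0) (i : {x : ι // x ≠ p}) :
    (sc M p).mulVec (fun j : {x : ι // x ≠ p} => w ↑j) i = M.mulVec w ↑i := by
  have hsump : M p p * w p + ∑ x : {x : ι // x ≠ p}, M p ↑x * w ↑x = 0 := by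
    have := sum_split p (fun x => M p x * w x)
    rw [← this]
    simpa [Matrix.mulVec, dotProduct] using htight
  have hsumi : (M.mulVec w) ↑i = M ↑i p * w p + ∑ x : {x : ι // x ≠ p}, M ↑i ↑x * w ↑x := by
    have := sum_split p (fun x => M (↑i) x * w x)
    simpa [Matrix.mulVec, dotProduct] using this
  have expand : (sc M p).mulVec (fun j : {x : ι // x ≠ p} => w ↑j) i
      = (∑ x : {x : ι // x ≠ p}, M ↑i ↑x * w ↑x)
        - (M ↑i p / M p p) * (∑ x : {x : ι // x ≠ p}, M p ↑x * w ↑x) := by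
    simp only [Matrix.mulVec, dotProduct, sc, sub_mul, Finset.sum_sub_distrib, Finset.mul_sum]
    congr 1
    apply Finset.sum_congr rfl
    intro x _
    ring
  rw [expand, hsumi]
  have h2 : ∑ x : {x : ι // x ≠ p}, M p ↑x * w ↑x = -(M p p * w p) := by linarith
  rw [h2]
  field_simp
  ring

lemma L1 : ∀ (N : ℕ) (ι : Type) [Fintype ι] [DecidableEq ι] [Nonempty ι]
    (M : Matrix ι ι ℝ) (w : ι → ℝ), Fintype.card ι ≤ N → PmatI M →
    (∀ i, 0 < w i) → (∀ i, M.mulVec w i ≤ 0) → False := by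
  intro N
  induction N with
  | zero =>
    intro ι _ _ _ M w hcard _ _ _
    have := Fintype.card_pos (α := ι)
    omega
  | succ N ih =>
    intro ι _ _ _ M w hcard hP hw hMw
    obtain ⟨j⟩ := ‹Nonempty ι›
    obtain ⟨p, w', hw', hMw', htight, hpj⟩ := tighten M w hw hMw j j (hP.diag_pos j)
    have hpp : 0 < M p p := hP.diag_pos p
    by_cases hS : Nonempty {i : ι // i ≠ p}
    · haveI := hS
      have hcard' : Fintype.card {i : ι // i ≠ p} ≤ N := by
        have h2 : Fintype.card {i : ι // i ≠ p} < Fintype.card ι :=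
          Fintype.card_subtype_lt (x := p) (by simp)
        omega
      exact ih _ (sc M p) (fun i => w' ↑i) hcard' (Pmat_sc hP p) (fun i => hw' _)
        (fun i => by rw [sc_mulVec M p hpp.ne' w' htight]; exact hMw' _)
    · have hall : ∀ x : ι, x = p := by
        intro x; by_contra hx; exact hS ⟨⟨x, hx⟩⟩
      have huniv : (Finset.univ : Finset ι) = {p} := by
        ext x; simp [hall x]
      have : M.mulVec w' p = M p p * w' p := by
        simp [Matrix.mulVec, dotProduct, huniv]
      nlinarith [hw' p, htight, this]

lemma L2 (M : Matrix ι ι ℝ) (hM : NmatI M) (i₀ j₀ : ι) (hpos : 0 < M i₀ j₀)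
    (w : ι → ℝ) (hw : ∀ i, 0 < w i) (hMw : ∀ i, M.mulVec w i ≤ 0) : False := by
  obtain ⟨p, w', hw', hMw', htight, hpj⟩ := tighten M w hw hMw j₀ i₀ hpos
  have hpp : M p p < 0 := hM.diag_neg p
  have hpj0 : p ≠ j₀ := by rintro rfl; exact absurd hpj (not_lt.2 hpp.le)
  haveI : Nonempty {i : ι // i ≠ p} := ⟨⟨j₀, fun h => hpj0 h.symm⟩⟩
  exact L1 (Fintype.card {i : ι // i ≠ p}) _ (sc M p) (fun i => w' ↑i) le_rfl
    (Nmat_sc hM p) (fun i => hw' _)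
    (fun i => by rw [sc_mulVec M p hpp.ne w' htight]; exact hMw' _)

end Core


lemma nonvanish {n : ℕ} (J : Finset (Fin n)) (A B : Matrix (Fin n) (Fin n) ℝ)
    (e : Fin n → ℝ) (he1 : ∀ i, i ∈ J → e i = 1) (he2 : ∀ i, i ∉ J → e i = -1)
    (hH : ∀ z : Fin n → ℝ, SignVec z → z ≠ e → z ≠ (fun i => -(e i)) →
      IsNMatrix (Iz A B z) ∧ BlockPattern (Iz A B z) J)
    (hKS : ∀ C' ∈ IntervalHull A B, ∀ i j, e i * C' i j * e j < 0)
    (C' : Matrix (Fin n) (Fin n) ℝ) (hC' : C' ∈ IntervalHull A B)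
    (s : Finset (Fin n))
    (hdet : (C'.submatrix (fun i : s => (i : Fin n)) (fun j : s => (j : Fin n))).det = 0) :
    False := by
  classical
  have hesign : ∀ i, e i = 1 ∨ e i = -1 := by
    intro i
    by_cases h : i ∈ J
    · exact Or.inl (he1 i h)
    · exact Or.inr (he2 i h)
  have hee : ∀ i, e i * e i = 1 := by
    intro i; rcases hesign i with h | h <;> rw [h] <;> norm_num
  obtain ⟨x, hx0, hxker⟩ := Matrix.exists_mulVec_eq_zero_iff.mpr hdet
  set x' : Fin n → ℝ := fun i => if h : i ∈ s then x ⟨i, h⟩ else 0 with hx'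
  have hx's : ∀ j : {y // y ∈ s}, x' ↑j = x j := by
    intro j
    rw [hx']
    simp only
    rw [dif_pos j.2]
  have hx'ns : ∀ i, i ∉ s → x' i = 0 := by
    intro i h; simp [hx', h]
  have hker : ∀ i, i ∈ s → C'.mulVec x' i = 0 := by
    intro i h
    have h1 : C'.mulVec x' i = ∑ j : {y // y ∈ s}, C' i ↑j * x j := by
      rw [Matrix.mulVec, dotProduct]
      rw [← Finset.sum_subset (Finset.subset_univ s)
        (fun j _ hj => by rw [hx'ns j hj, mul_zero])]
      rw [← Finset.sum_coe_sort s (fun j => C' i j * x' j)]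
      exact Finset.sum_congr rfl (fun j _ => by rw [hx's j])
    have h2 : ∑ j : {y // y ∈ s}, C' i ↑j * x j = 0 := by
      have h3 := congrFun hxker ⟨i, h⟩
      simpa [Matrix.mulVec, dotProduct] using h3
    rw [h1, h2]
  set T : Finset (Fin n) := Finset.univ.filter (fun i => x' i ≠ 0) with hT
  have hTmem : ∀ i, i ∈ T ↔ x' i ≠ 0 := by intro i; simp [hT]
  have hTs : ∀ i, i ∈ T → i ∈ s := by
    intro i hi
    by_contra h
    exact ((hTmem i).mp hi) (hx'ns i h)
  have hTne : T.Nonempty := by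
    obtain ⟨a, ha⟩ := Function.ne_iff.mp hx0
    refine ⟨↑a, (hTmem ↑a).mpr ?_⟩
    rw [hx's a]
    simpa using ha
  have aligned : ∀ σ : ℝ, (∀ i, i ∈ T → 0 < σ * (e i * x' i)) → False := by
    intro σ hal
    obtain ⟨i₀, hi₀⟩ := hTne
    have hi₀s : i₀ ∈ s := hTs i₀ hi₀
    have h2 : ∑ j, C' i₀ j * x' j = 0 := by
      have := hker i₀ hi₀s
      simpa [Matrix.mulVec, dotProduct] using this
    have hsum : ∑ j : Fin n, (e i₀ * C' i₀ j * e j) * (σ * (e j * x' j)) = 0 := by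
      calc ∑ j : Fin n, (e i₀ * C' i₀ j * e j) * (σ * (e j * x' j))
          = σ * e i₀ * ∑ j, C' i₀ j * x' j := by
            rw [Finset.mul_sum]
            refine Finset.sum_congr rfl (fun j _ => ?_)
            linear_combination (σ * e i₀ * C' i₀ j * x' j) * hee j
        _ = 0 := by rw [h2]; ring
    have hlt : ∑ j : Fin n, (e i₀ * C' i₀ j * e j) * (σ * (e j * x' j)) < 0 := by
      have h5 := Finset.sum_lt_sum
        (f := fun j : Fin n => (e i₀ * C' i₀ j * e j) * (σ * (e j * x' j)))
        (g := fun _ : Fin n => (0 : ℝ))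
        (s := Finset.univ) ?_ ?_
      · simpa using h5
      · intro j _
        by_cases hj : j ∈ T
        · simpa using (mul_neg_of_neg_of_pos (hKS C' hC' i₀ j) (hal j hj)).le
        · have hxj : x' j = 0 := by
            by_contra hc; exact hj ((hTmem j).mpr hc)
          simp [hxj]
      · refine ⟨i₀, Finset.mem_univ i₀, ?_⟩
        simpa using mul_neg_of_neg_of_pos (hKS C' hC' i₀ i₀) (hal i₀ hi₀)
    linarith
  by_cases hpos : ∃ i ∈ T, 0 < e i * x' i
  case neg =>
    push_neg at hpos
    refine aligned (-1) (fun i hi => ?_)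
    have h1 : e i * x' i ≠ 0 := by
      rcases hesign i with h | h <;> rw [h] <;>
        simpa using (hTmem i).mp hi
    have := lt_of_le_of_ne (hpos i hi) h1
    nlinarith
  case pos =>
  by_cases hneg : ∃ i ∈ T, e i * x' i < 0
  case neg =>
    push_neg at hneg
    refine aligned 1 (fun i hi => ?_)
    have h1 : e i * x' i ≠ 0 := by
      rcases hesign i with h | h <;> rw [h] <;>
        simpa using (hTmem i).mp hi
    have := lt_of_le_of_ne (hneg i hi) (Ne.symm h1)
    nlinarith
  case pos =>
  obtain ⟨i₁, hi₁T, hi₁⟩ := hpos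
  obtain ⟨i₂, hi₂T, hi₂⟩ := hneg
  set z : Fin n → ℝ := fun i => if x' i = 0 then e i else if 0 < x' i then 1 else -1
    with hzdef
  have hzsv : SignVec z := by
    intro i
    simp only [hzdef]
    split_ifs with h1 h2
    · exact hesign i
    · exact Or.inl rfl
    · exact Or.inr rfl
  have hzx : ∀ i, z i * x' i = |x' i| := by
    intro i
    simp only [hzdef]
    split_ifs with h1 h2
    · rw [h1]; simp
    · rw [abs_of_pos h2]; ring
    · rw [abs_of_neg (lt_of_le_of_ne (not_lt.mp h2) h1)]; ring
  have hzz : ∀ i, z i * z i = 1 := by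
    intro i; rcases hzsv i with h | h <;> rw [h] <;> norm_num
  have hz_e : ∀ i, 0 < e i * x' i → z i = e i := by
    intro i hp
    have hne0 : x' i ≠ 0 := by
      intro hc; rw [hc, mul_zero] at hp; exact lt_irrefl _ hp
    rcases hesign i with h | h <;> rw [h] at hp ⊢ <;> simp only [hzdef]
    · have hxp : 0 < x' i := by nlinarith
      rw [if_neg hne0, if_pos hxp]
    · have hxn : x' i < 0 := by nlinarith
      rw [if_neg hne0, if_neg (not_lt.mpr hxn.le)]
  have hz_ne : ∀ i, e i * x' i < 0 → z i = -(e i) := by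
    intro i hp
    have hne0 : x' i ≠ 0 := by
      intro hc; rw [hc, mul_zero] at hp; exact lt_irrefl _ hp
    rcases hesign i with h | h <;> rw [h] at hp ⊢ <;> simp only [hzdef]
    · have hxn : x' i < 0 := by nlinarith
      rw [if_neg hne0, if_neg (not_lt.mpr hxn.le)]
    · have hxp : 0 < x' i := by nlinarith
      rw [if_neg hne0, if_pos hxp]
      norm_num
  have hz1 : z i₁ = e i₁ := hz_e i₁ hi₁
  have hz2 : z i₂ = -(e i₂) := hz_ne i₂ hi₂
  have hzne1 : z ≠ e := by
    intro hc
    have := congrFun hc i₂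
    rw [hz2] at this
    have h4 := hee i₂
    nlinarith
  have hzne2 : z ≠ (fun i => -(e i)) := by
    intro hc
    have := congrFun hc i₁
    rw [hz1] at this
    have h4 := hee i₁
    nlinarith
  obtain ⟨hNz, hBPz⟩ := hH z hzsv hzne1 hzne2
  have hbound : ∀ i j, |C' i j - Ic A B i j| ≤ Dlt A B i j := by
    intro i j
    obtain ⟨hlo, hhi⟩ := (mem_hull_iff A B C').mp hC' i j
    rw [abs_le]
    constructor
    · linarith [Ic_sub_Dlt A B i j]
    · linarith [Ic_add_Dlt A B i j]
  have hRohn : ∀ i, x' i * (Iz A B z).mulVec x' i ≤ 0 := by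
    intro i
    have key : x' i * (Iz A B z).mulVec x' i ≤ x' i * C'.mulVec x' i := by
      rw [Matrix.mulVec, Matrix.mulVec, dotProduct, dotProduct, Finset.mul_sum,
        Finset.mul_sum]
      refine Finset.sum_le_sum (fun j _ => ?_)
      rw [Iz_apply]
      have h1 : |x' i * x' j * (C' i j - Ic A B i j)| ≤ |x' i| * |x' j| * Dlt A B i j := by
        rw [abs_mul, abs_mul]
        exact mul_le_mul_of_nonneg_left (hbound i j) (by positivity)
      have h2 := neg_abs_le (x' i * x' j * (C' i j - Ic A B i j))
      have h3 : x' i * (z i * Dlt A B i j * z j * x' j)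
          = |x' i| * |x' j| * Dlt A B i j := by
        rw [← hzx i, ← hzx j]; ring
      nlinarith [h1, h2, h3]
    rcases Decidable.em (i ∈ s) with h | h
    · rw [hker i h, mul_zero] at key
      exact key
    · rw [hx'ns i h, zero_mul]
  set M : Matrix {i // i ∈ T} {i // i ∈ T} ℝ :=
    fun i j => z ↑i * Iz A B z ↑i ↑j * z ↑j with hM
  set v : {i // i ∈ T} → ℝ := fun i => z ↑i * x' ↑i with hv
  have hvpos : ∀ i, 0 < v i := by
    intro i
    simp only [hv]
    rw [hzx]
    exact abs_pos.mpr ((hTmem ↑i).mp i.2)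
  have hsubsum : ∀ i : Fin n, ∑ j : {y // y ∈ T}, Iz A B z i ↑j * x' ↑j
      = (Iz A B z).mulVec x' i := by
    intro i
    rw [Matrix.mulVec, dotProduct,
      Finset.sum_coe_sort T (fun j => Iz A B z i j * x' j)]
    refine Finset.sum_subset (Finset.subset_univ T) (fun j _ hj => ?_)
    have hxj : x' j = 0 := by by_contra hc; exact hj ((hTmem j).mpr hc)
    rw [hxj, mul_zero]
  have hMv : ∀ i, M.mulVec v i ≤ 0 := by
    intro i
    have hexp : M.mulVec v i = z ↑i * (Iz A B z).mulVec x' ↑i := by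
      rw [Matrix.mulVec, dotProduct]
      have step1 : ∀ j : {y // y ∈ T}, M i j * v j
          = z ↑i * (Iz A B z ↑i ↑j * x' ↑j) := by
        intro j
        simp only [hM, hv]
        linear_combination (z ↑i * Iz A B z ↑i ↑j * x' ↑j) * hzz ↑j
      rw [Finset.sum_congr rfl (fun j _ => step1 j), ← Finset.mul_sum, hsubsum ↑i]
    have h4 : v i * M.mulVec v i = x' ↑i * (Iz A B z).mulVec x' ↑i := by
      rw [hexp]
      simp only [hv]
      linear_combination ((Iz A B z).mulVec x' ↑i * x' ↑i) * hzz ↑i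
    have h5 := hRohn ↑i
    rw [← h4] at h5
    nlinarith [hvpos i]
  have hNM : NmatI M := by
    intro k f hf
    set cf : Fin (k + 1) → Fin n := fun a => ↑(f a) with hcf
    have hcfinj : Function.Injective cf := by
      intro a b hab
      exact hf (Subtype.ext hab)
    have hdetN := det_inj_neg hNz cf hcfinj
    have key : M.submatrix f f
        = Matrix.diagonal (fun a => z (cf a)) * (Iz A B z).submatrix cf cf
            * Matrix.diagonal (fun a => z (cf a)) := by
      ext a b
      rw [Matrix.mul_diagonal, Matrix.diagonal_mul]
      simp [hM, hcf]
      rfl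
    rw [key, Matrix.det_mul, Matrix.det_mul, Matrix.det_diagonal]
    have hprod : (∏ a, z (cf a)) * (∏ a, z (cf a)) = 1 := by
      rw [← Finset.prod_mul_distrib]
      rw [Finset.prod_congr rfl (fun a _ => hzz (cf a))]
      exact Finset.prod_const_one
    nlinarith [hdetN, hprod]
  have hposEntry : 0 < M ⟨i₁, hi₁T⟩ ⟨i₂, hi₂T⟩ := by
    simp only [hM]
    rw [hz1, hz2]
    obtain ⟨hBP1, hBP2, hBP3, hBP4⟩ := hBPz
    by_cases h1 : i₁ ∈ J <;> by_cases h2 : i₂ ∈ J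
    · have h5 := hBP1 i₁ h1 i₂ h2
      rw [he1 i₁ h1, he1 i₂ h2]
      nlinarith
    · have h5 := hBP3 i₁ h1 i₂ h2
      rw [he1 i₁ h1, he2 i₂ h2]
      nlinarith
    · have h5 := hBP4 i₁ h1 i₂ h2
      rw [he2 i₁ h1, he1 i₂ h2]
      nlinarith
    · have h5 := hBP2 i₁ h1 i₂ h2
      rw [he2 i₁ h1, he2 i₂ h2]
      nlinarith
  exact L2 M hNM ⟨i₁, hi₁T⟩ ⟨i₂, hi₂T⟩ hposEntry v hvpos hMv

lemma flip_facts {n : ℕ} (e : Fin n → ℝ) (he : ∀ i, e i = 1 ∨ e i = -1)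
    (j₀ w : Fin n) (hw : w ≠ j₀) :
    SignVec (fun i => if i = j₀ then -(e i) else e i) ∧
    (fun i => if i = j₀ then -(e i) else e i) ≠ e ∧
    (fun i => if i = j₀ then -(e i) else e i) ≠ (fun i => -(e i)) := by
  refine ⟨?_, ?_, ?_⟩
  · intro i
    show (if i = j₀ then -(e i) else e i) = 1 ∨ (if i = j₀ then -(e i) else e i) = -1
    split_ifs with h
    · rcases he i with h1 | h1 <;> rw [h1] <;> norm_num
    · exact he i
  · intro hc
    have := congrFun hc j₀
    rw [if_pos rfl] at this
    rcases he j₀ with h1 | h1 <;> rw [h1] at this <;> norm_num at this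
  · intro hc
    have := congrFun hc w
    rw [if_neg hw] at this
    rcases he w with h1 | h1 <;> rw [h1] at this <;> norm_num at this

theorem stmt9 {n : ℕ} (J : Finset (Fin n)) (hJ : J.Nonempty) (hJ2 : J ≠ Finset.univ)
    (A B : Matrix (Fin n) (Fin n) ℝ) (hd : ∀ i, max (A i i) (B i i) < 0) :
    (∀ C ∈ IntervalHull A B, IsNMatrixFirst C J) ↔
      ∀ z : Fin n → ℝ, SignVec z →
        z ≠ (fun i => if i ∈ J then (1:ℝ) else -1) →
        z ≠ (fun i => if i ∈ J then (-1:ℝ) else 1) →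
        IsNMatrixFirst (Iz A B z) J := by
  classical
  set e : Fin n → ℝ := fun i => if i ∈ J then (1:ℝ) else -1 with hedef
  have he1 : ∀ i, i ∈ J → e i = 1 := fun i h => by simp [hedef, h]
  have he2 : ∀ i, i ∉ J → e i = -1 := fun i h => by simp [hedef, h]
  have hesv : ∀ i, e i = 1 ∨ e i = -1 := by
    intro i
    by_cases h : i ∈ J
    · exact Or.inl (he1 i h)
    · exact Or.inr (he2 i h)
  have hpat2 : (fun i => if i ∈ J then (-1:ℝ) else 1) = fun i => -(e i) := by
    funext i
    by_cases h : i ∈ J <;> simp [hedef, h]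
  obtain ⟨a, haJ⟩ := hJ
  obtain ⟨b, hbJ⟩ : ∃ b, b ∉ J := by
    by_contra h
    push_neg at h
    exact hJ2 (Finset.eq_univ_iff_forall.mpr h)
  have hab : a ≠ b := fun h => hbJ (h ▸ haJ)
  constructor
  · intro hAll z hz _ _
    exact hAll _ (Iz_mem_hull A B hz)
  · intro H
    have H' : ∀ z : Fin n → ℝ, SignVec z → z ≠ e → z ≠ (fun i => -(e i)) →
        IsNMatrix (Iz A B z) ∧ BlockPattern (Iz A B z) J := by
      intro z hz h1 h2
      exact H z hz h1 (by rw [hpat2]; exact h2)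
    have F2 : ∀ i j, (i ∈ J ↔ j ∈ J) → Iu A B i j < 0 := by
      intro i j hij
      rcases eq_or_ne i j with rfl | hne
      · exact hd i
      · obtain ⟨hsv, hne1, hne2⟩ := flip_facts e hesv j i hne
        obtain ⟨_, hBP⟩ := H' _ hsv hne1 hne2
        have hzi : (fun i' => if i' = j then -(e i') else e i') i = e i := if_neg hne
        have hzj : (fun i' => if i' = j then -(e i') else e i') j = -(e j) := if_pos rfl
        have hzizj : (fun i' => if i' = j then -(e i') else e i') i
            * (fun i' => if i' = j then -(e i') else e i') j = -1 := by
          rw [hzi, hzj]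
          by_cases h : i ∈ J
          · rw [he1 i h, he1 j (hij.mp h)]; norm_num
          · rw [he2 i h, he2 j (fun hj => h (hij.mpr hj))]; norm_num
        have hIz : Iz A B (fun i' => if i' = j then -(e i') else e i') i j = Iu A B i j := by
          rw [Iz_apply, ← Ic_add_Dlt]
          linear_combination (-(Dlt A B i j)) * hzizj
        have hlt : Iz A B (fun i' => if i' = j then -(e i') else e i') i j < 0 := by
          by_cases h : i ∈ J
          · exact hBP.1 i h j (hij.mp h)
          · exact hBP.2.1 i h j (fun hj => h (hij.mpr hj))
        rwa [hIz] at hlt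
    have F3 : ∀ i j, ¬(i ∈ J ↔ j ∈ J) → 0 < Il A B i j := by
      intro i j hij
      have hne : i ≠ j := by rintro rfl; exact hij Iff.rfl
      obtain ⟨hsv, hne1, hne2⟩ := flip_facts e hesv j i hne
      obtain ⟨_, hBP⟩ := H' _ hsv hne1 hne2
      have hzi : (fun i' => if i' = j then -(e i') else e i') i = e i := if_neg hne
      have hzj : (fun i' => if i' = j then -(e i') else e i') j = -(e j) := if_pos rfl
      have hzizj : (fun i' => if i' = j then -(e i') else e i') i
          * (fun i' => if i' = j then -(e i') else e i') j = 1 := by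
        rw [hzi, hzj]
        by_cases h : i ∈ J
        · rw [he1 i h, he2 j (fun hj => hij ⟨fun _ => hj, fun _ => h⟩)]; norm_num
        · rw [he2 i h, he1 j ?_]
          · norm_num
          · by_contra hj
            exact hij ⟨fun hi => absurd hi h, fun hj' => absurd hj' hj⟩
      have hIz : Iz A B (fun i' => if i' = j then -(e i') else e i') i j = Il A B i j := by
        rw [Iz_apply, ← Ic_sub_Dlt]
        linear_combination (-(Dlt A B i j)) * hzizj
      have hlt : 0 < Iz A B (fun i' => if i' = j then -(e i') else e i') i j := by
        by_cases h : i ∈ J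
        · refine hBP.2.2.1 i h j ?_
          intro hj
          exact hij ⟨fun _ => hj, fun _ => h⟩
        · refine hBP.2.2.2 i h j ?_
          by_contra hj
          exact hij ⟨fun hi => absurd hi h, fun hj' => absurd hj' hj⟩
      rwa [hIz] at hlt
    have hBPhull : ∀ C ∈ IntervalHull A B, BlockPattern C J := by
      intro C hC
      have hb := (mem_hull_iff A B C).mp hC
      refine ⟨?_, ?_, ?_, ?_⟩
      · intro i hi j hj
        have := F2 i j ⟨fun _ => hj, fun _ => hi⟩
        linarith [(hb i j).2]
      · intro i hi j hj
        have := F2 i j ⟨fun h => absurd h hi, fun h => absurd h hj⟩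
        linarith [(hb i j).2]
      · intro i hi j hj
        have := F3 i j (fun h => hj (h.mp hi))
        linarith [(hb i j).1]
      · intro i hi j hj
        have := F3 i j (fun h => hi (h.mpr hj))
        linarith [(hb i j).1]
    have hKS : ∀ C ∈ IntervalHull A B, ∀ i j, e i * C i j * e j < 0 := by
      intro C hC i j
      obtain ⟨hBP1, hBP2, hBP3, hBP4⟩ := hBPhull C hC
      by_cases h1 : i ∈ J <;> by_cases h2 : j ∈ J
      · have := hBP1 i h1 j h2; rw [he1 i h1, he1 j h2]; nlinarith
      · have := hBP3 i h1 j h2; rw [he1 i h1, he2 j h2]; nlinarith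
      · have := hBP4 i h1 j h2; rw [he2 i h1, he1 j h2]; nlinarith
      · have := hBP2 i h1 j h2; rw [he2 i h1, he2 j h2]; nlinarith
    intro C hC
    refine ⟨?_, hBPhull C hC⟩
    intro s hs
    obtain ⟨hsv, hne1, hne2⟩ := flip_facts e hesv b a hab
    obtain ⟨hN₀, _⟩ := H' _ hsv hne1 hne2
    have h0 := hN₀ s hs
    by_contra hcon
    push_neg at hcon
    set P : ℝ → Matrix (Fin n) (Fin n) ℝ := fun t => fun i j =>
      (1 - t) * Iz A B (fun i' => if i' = b then -(e i') else e i') i j + t * C i j with hP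
    have hPmem : ∀ t, t ∈ Set.Icc (0:ℝ) 1 → P t ∈ IntervalHull A B := by
      rintro t ⟨ht0, ht1⟩
      rw [mem_hull_iff]
      intro i j
      obtain ⟨l1, u1⟩ := (mem_hull_iff A B _).mp (Iz_mem_hull A B hsv) i j
      obtain ⟨l2, u2⟩ := (mem_hull_iff A B C).mp hC i j
      constructor <;> simp only [hP] <;> nlinarith
    have hP0 : P 0 = Iz A B (fun i' => if i' = b then -(e i') else e i') := by
      funext i j; simp [hP]
    have hP1 : P 1 = C := by
      funext i j; simp [hP]
    set g : ℝ → ℝ := fun t =>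
      ((P t).submatrix (fun i : s => (i : Fin n)) (fun j : s => (j : Fin n))).det with hg
    have hgc : Continuous g := by
      apply Continuous.matrix_det
      apply continuous_matrix
      intro i j
      simp only [hP, Matrix.submatrix_apply]
      fun_prop
    have hg0 : g 0 < 0 := by
      simp only [hg]
      rw [hP0]
      exact h0
    have hg1 : 0 ≤ g 1 := by
      simp only [hg]
      rw [hP1]
      exact hcon
    have hiv := intermediate_value_Icc (by norm_num : (0:ℝ) ≤ 1) hgc.continuousOn
    obtain ⟨t, htI, hgt⟩ := hiv ⟨hg0.le, hg1⟩
    exact nonvanish J A B e he1 he2 H' hKS (P t) (hPmem t htI) s hgt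
end

section
/- Let A ∈ ℝ^{n×n} with n ≥ 2 be invertible. Then A is an almost P-matrix (all proper principal minors positive, det A < 0) if and only if A^{-1} is an N-matrix (all principal minors negative). -/
open Matrix Finset

lemma det_eq_principal {n : ℕ} (M : Matrix (Fin n) (Fin n) ℝ) (s : Finset (Fin n))
    (h : ∀ i j, j ∉ s → M i j = if i = j then 1 else 0) :
    M.det = (M.submatrix (fun i : s => (i : Fin n)) (fun j : s => (j : Fin n))).det := by
  classical
  let e := Equiv.sumCompl (fun x : Fin n => x ∈ s)
  rw [← Matrix.det_submatrix_equiv_self e M]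
  have hM : M.submatrix e e = Matrix.fromBlocks
      (M.submatrix (fun i : s => (i : Fin n)) (fun j : s => (j : Fin n)))
      0 (M.submatrix (fun i : {x : Fin n // x ∉ s} => (i : Fin n))
        (fun j : s => (j : Fin n))) 1 := by
    ext i j
    rcases i with i | i <;> rcases j with j | j
    · simp [e, Matrix.fromBlocks]
    · simp only [e, Equiv.sumCompl_apply_inl, Equiv.sumCompl_apply_inr,
        Matrix.submatrix_apply, Matrix.fromBlocks_apply₁₂, Matrix.zero_apply]
      rw [h _ _ j.2]
      have : (i : Fin n) ≠ (j : Fin n) := by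
        intro hij; exact j.2 (hij ▸ i.2)
      simp [this]
    · simp [e, Matrix.fromBlocks]
    · simp only [e, Equiv.sumCompl_apply_inr, Matrix.submatrix_apply,
        Matrix.fromBlocks_apply₂₂]
      rw [h _ _ j.2, Matrix.one_apply]
      simp [Subtype.ext_iff]
  rw [hM, Matrix.det_fromBlocks_zero₁₂]
  simp

lemma jacobi {n : ℕ} (A : Matrix (Fin n) (Fin n) ℝ) (hA : IsUnit A.det)
    (s : Finset (Fin n)) :
    (A⁻¹.submatrix (fun i : s => (i : Fin n)) (fun j : s => (j : Fin n))).det * A.det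
    = (A.submatrix (fun i : (sᶜ : Finset (Fin n)) => (i : Fin n))
        (fun j : (sᶜ : Finset (Fin n)) => (j : Fin n))).det := by
  classical
  set B : Matrix (Fin n) (Fin n) ℝ :=
    fun i j => if j ∈ s then A⁻¹ i j else if i = j then 1 else 0 with hB
  have hdB : B.det = (A⁻¹.submatrix (fun i : s => (i : Fin n))
      (fun j : s => (j : Fin n))).det := by
    rw [det_eq_principal B s (by intro i j hj; simp [hB, hj])]
    congr 1
    ext i j
    rw [Matrix.submatrix_apply, Matrix.submatrix_apply]
    simp [hB, j.2]
  have hAB : ∀ i j, (A * B) i j = if j ∈ s then (if i = j then 1 else 0) else A i j := by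
    intro i j
    by_cases hj : j ∈ s
    · have : (A * B) i j = (A * A⁻¹) i j := by
        rw [Matrix.mul_apply, Matrix.mul_apply]; simp only [hB]
        exact Finset.sum_congr rfl (fun k _ => by simp [hj])
      rw [this, Matrix.mul_nonsing_inv A hA]
      simp [Matrix.one_apply, hj]
    · have : (A * B) i j = (A * (1 : Matrix (Fin n) (Fin n) ℝ)) i j := by
        rw [Matrix.mul_apply, Matrix.mul_apply]; simp only [hB]
        refine Finset.sum_congr rfl (fun k _ => ?_)
        simp [hj, Matrix.one_apply]
      rw [this, Matrix.mul_one]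
      simp [hj]
  have hdAB : (A * B).det = (A.submatrix (fun i : (sᶜ : Finset (Fin n)) => (i : Fin n))
      (fun j : (sᶜ : Finset (Fin n)) => (j : Fin n))).det := by
    rw [det_eq_principal (A * B) sᶜ (by
      intro i j hj
      rw [hAB]
      simp only [Finset.mem_compl, not_not] at hj
      simp [hj])]
    congr 1
    ext i j
    have hj : (j : Fin n) ∉ s := Finset.mem_compl.mp j.2
    simp [hAB, hj]
  rw [← hdB, mul_comm, ← Matrix.det_mul, hdAB]

lemma det_univ_submatrix {n : ℕ} (M : Matrix (Fin n) (Fin n) ℝ) :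
    (M.submatrix (fun i : (Finset.univ : Finset (Fin n)) => (i : Fin n))
      (fun j : (Finset.univ : Finset (Fin n)) => (j : Fin n))).det = M.det := by
  exact Matrix.det_submatrix_equiv_self
    (⟨fun x => x.1, fun x => ⟨x, Finset.mem_univ x⟩, fun x => rfl, fun x => rfl⟩ :
      {x : Fin n // x ∈ (Finset.univ : Finset (Fin n))} ≃ Fin n) M

theorem stmt10 {n : ℕ} (hn : 2 ≤ n) (A : Matrix (Fin n) (Fin n) ℝ)
    (hA : IsUnit A.det) :
    IsAlmostPMatrix A ↔ IsNMatrix A⁻¹ := by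
  classical
  have hdet0 : A.det ≠ 0 := by
    intro h; rw [h] at hA; exact (not_isUnit_zero hA)
  have hdinv : A⁻¹.det = (A.det)⁻¹ := by
    rw [Matrix.det_nonsing_inv, Ring.inverse_eq_inv']
  have hNe : Nonempty (Fin n) := ⟨⟨0, by omega⟩⟩
  constructor
  · rintro ⟨hP, hd⟩
    intro s hs
    have hj := jacobi A hA s
    by_cases hu : s = Finset.univ
    · subst hu
      have hc : (Finset.univ : Finset (Fin n))ᶜ = ∅ := by simp
      haveI : IsEmpty {x : Fin n // x ∈ (Finset.univ : Finset (Fin n))ᶜ} :=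
        ⟨fun x => by simpa using x.2⟩
      have h1 : (A.submatrix
          (fun i : ((Finset.univ : Finset (Fin n))ᶜ : Finset (Fin n)) => (i : Fin n))
          (fun j : ((Finset.univ : Finset (Fin n))ᶜ : Finset (Fin n)) => (j : Fin n))).det
          = 1 := Matrix.det_isEmpty
      rw [h1] at hj
      nlinarith [hj, hd]
    · have hcne : sᶜ.Nonempty := by
        rw [Finset.nonempty_iff_ne_empty]
        intro h
        exact hu (by simpa [Finset.compl_eq_empty_iff] using h)
      have hcnu : sᶜ ≠ Finset.univ := by
        intro h
        obtain ⟨x, hx⟩ := hs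
        have : x ∈ sᶜ := h ▸ Finset.mem_univ x
        exact (Finset.mem_compl.mp this) hx
      have hpos := hP sᶜ hcne hcnu
      nlinarith [hj, hpos, hd]
  · intro hN
    have hdinvneg : A⁻¹.det < 0 := by
      have := hN Finset.univ Finset.univ_nonempty
      rwa [det_univ_submatrix] at this
    have hdneg : A.det < 0 := by
      rw [hdinv] at hdinvneg
      exact inv_neg''.mp hdinvneg
    refine ⟨?_, hdneg⟩
    intro s hs hu
    have hAinv : IsUnit A⁻¹.det := by
      rw [hdinv]; exact (isUnit_iff_ne_zero).mpr (inv_ne_zero hdet0)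
    have hj := jacobi A⁻¹ hAinv s
    rw [Matrix.nonsing_inv_nonsing_inv A hA] at hj
    have hcne : sᶜ.Nonempty := by
      rw [Finset.nonempty_iff_ne_empty]
      intro h
      exact hu (by simpa [Finset.compl_eq_empty_iff] using h)
    have hneg := hN sᶜ hcne
    nlinarith [hj, hneg, hdinvneg]
end
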